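/- arXiv:1408.3935 — 5 statements merged into one kernel-verified Lean document; each statement's English description precedes it below -/
import Mathlib

section
/- Every edge-maximal K_4-minor-free graph is 2-clique-colorable. -/
open SimpleGraph

/-- `H` is a minor of `G`: there is a family of pairwise disjoint nonempty connected
branch sets in `G`, one for each vertex of `H`, with an edge of `G` between the branch
sets of any two adjacent vertices of `H`. -/
def SimpleGraph.HasMinor {V W : Type*} (G : SimpleGraph V) (H : SimpleGraph W) : Prop :=
  ∃ f : W → Set V,
    (∀ w, (f w).Nonempty) ∧
    (∀ w, (G.induce (f w)).Connected) ∧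
    (∀ w₁ w₂, w₁ ≠ w₂ → Disjoint (f w₁) (f w₂)) ∧
    (∀ w₁ w₂, H.Adj w₁ w₂ → ∃ v₁ ∈ f w₁, ∃ v₂ ∈ f w₂, G.Adj v₁ v₂)

/-- `G` contains no induced subgraph isomorphic to the claw `K_{1,3}`. -/
def SimpleGraph.ClawFree {V : Type*} (G : SimpleGraph V) : Prop :=
  IsEmpty (completeBipartiteGraph (Fin 1) (Fin 3) ↪g G)

/-- `s` is a maximal clique of `G`. -/
def SimpleGraph.IsMaxClique {V : Type*} (G : SimpleGraph V) (s : Set V) : Prop :=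
  G.IsClique s ∧ ∀ t : Set V, G.IsClique t → s ⊆ t → s = t

/-- `c` is a clique-coloring of `G`: no maximal clique with at least two vertices
is monochromatic. -/
def SimpleGraph.IsCliqueColoring {V : Type*} (G : SimpleGraph V) {k : ℕ} (c : V → Fin k) : Prop :=
  ∀ s : Set V, G.IsMaxClique s → s.Nontrivial → ∃ u ∈ s, ∃ v ∈ s, c u ≠ c v

/-- `G` is `k`-clique-colorable. -/
def SimpleGraph.CliqueColorable {V : Type*} (G : SimpleGraph V) (k : ℕ) : Prop :=
  ∃ c : V → Fin k, G.IsCliqueColoring c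

/-- `G` is an odd cycle, i.e. isomorphic to `C_n` for some odd `n ≥ 3`. -/
def SimpleGraph.IsOddCycle {V : Type*} (G : SimpleGraph V) : Prop :=
  ∃ n : ℕ, 3 ≤ n ∧ Odd n ∧ Nonempty (G ≃g cycleGraph n)

/-- `D` meets every (nonempty) maximal clique of `G`. -/
def SimpleGraph.IsCliqueTransversal {V : Type*} (G : SimpleGraph V) (D : Set V) : Prop :=
  ∀ s : Set V, G.IsMaxClique s → s.Nonempty → (D ∩ s).Nonempty

/-- `G` is `H`-minor-free, but adding any edge between two distinct nonadjacent
vertices creates an `H` minor. -/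
def SimpleGraph.EdgeMaximalMinorFree {V W : Type*} (G : SimpleGraph V) (H : SimpleGraph W) : Prop :=
  ¬ G.HasMinor H ∧ ∀ u v : V, u ≠ v → ¬ G.Adj u v →
    (G ⊔ fromEdgeSet {s(u, v)}).HasMinor H

/-!
An edge-maximal `K₄`-minor-free graph on at least four vertices has an edge `vw` whose two ends
separate it. Otherwise it would be 3-connected: a separation by one vertex, or by two
non-adjacent vertices, is ruled out by adding an edge across it, since the resulting `K₄` minor
survives on one side of the separation, where the new edge can be removed again (by deleting a
vertex of degree at most two, or by rerouting the edge through the other side). And a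
3-connected graph has a `K₄` minor, by contracting edges that keep it 3-connected until four
vertices remain. Both sides of the separation by `vw` are again edge-maximal `K₄`-minor-free, so
by induction every such graph has a proper 3-colouring and, on at least three vertices, every
edge lies in a triangle. Then every maximal clique is a rainbow triangle, and one colour class
against the other two is a 2-clique-colouring.

Induced subgraphs are handled as vertex sets `S : Set V` of a fixed graph.
-/

namespace Set

variable {α : Type*} {S : Set α} {x y z : α}

lemma diff_singleton_diff_singleton : (S \ {x}) \ {y} = S \ {x, y} := by
  rw [Set.sdiff_sdiff, ← Set.insert_eq]

lemma diff_singleton_diff_singleton_comm : (S \ {y}) \ {x} = S \ {x, y} := by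
  rw [Set.sdiff_sdiff_comm, diff_singleton_diff_singleton]

lemma nonempty_diff_pair_of_three_le_ncard [Finite α] (h : 3 ≤ S.ncard) (x y : α) :
    (S \ {x, y}).Nonempty :=
  Set.sdiff_nonempty_of_ncard_lt_ncard <|
    ((Set.ncard_insert_le x {y}).trans (by rw [Set.ncard_singleton])).trans_lt h

lemma nonempty_diff_triple_of_four_le_ncard [Finite α] (h : 4 ≤ S.ncard) (x y z : α) :
    ((S \ {x, y}) \ {z}).Nonempty := by
  rw [Set.sdiff_sdiff, Set.union_singleton]
  refine Set.sdiff_nonempty_of_ncard_lt_ncard (lt_of_le_of_lt ?_ h)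
  exact (Set.ncard_insert_le _ _).trans <| Nat.succ_le_succ <|
    (Set.ncard_insert_le x {y}).trans (by rw [Set.ncard_singleton])

end Set

lemma Equiv.Perm.exists_apply_eq_and_apply_eq {α : Type*} {a b a' b' : α}
    (hab : a ≠ b) (hab' : a' ≠ b') : ∃ σ : Equiv.Perm α, σ a = a' ∧ σ b = b' := by
  classical
  set τ := Equiv.swap a a'
  have hτb : τ b ≠ a' := fun h =>
    hab (τ.injective (h.trans (Equiv.swap_apply_left a a').symm)).symm
  refine ⟨Equiv.swap (τ b) b' * τ, ?_, Equiv.swap_apply_left _ _⟩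
  rw [Equiv.Perm.mul_apply, Equiv.swap_apply_left, Equiv.swap_apply_of_ne_of_ne hτb.symm hab']

namespace SimpleGraph

variable {V : Type*} {G G' : SimpleGraph V} {s s₁ s₂ t C F K P S S₁ S₂ T X : Set V}
  {a b c k m p q u v w x y z : V}

/-! ### Reachability inside a vertex set -/

def ReachableIn (G : SimpleGraph V) (s : Set V) : V → V → Prop :=
  Relation.ReflTransGen fun a b => G.Adj a b ∧ a ∈ s ∧ b ∈ s

def ConnectedOn (G : SimpleGraph V) (s : Set V) : Prop :=
  s.Nonempty ∧ ∀ a ∈ s, ∀ b ∈ s, G.ReachableIn s a b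

def componentIn (G : SimpleGraph V) (s : Set V) (a : V) : Set V :=
  {b ∈ s | G.ReachableIn s a b}

namespace ReachableIn

lemma refl : G.ReachableIn s a a := Relation.ReflTransGen.refl

lemma single (h : G.Adj a b) (ha : a ∈ s) (hb : b ∈ s) : G.ReachableIn s a b :=
  Relation.ReflTransGen.single ⟨h, ha, hb⟩

lemma tail (h : G.ReachableIn s a b) (hbc : G.Adj b c) (hb : b ∈ s) (hc : c ∈ s) :
    G.ReachableIn s a c :=
  Relation.ReflTransGen.tail h ⟨hbc, hb, hc⟩

lemma trans (h : G.ReachableIn s a b) (h' : G.ReachableIn s b c) : G.ReachableIn s a c :=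
  Relation.ReflTransGen.trans h h'

lemma symm (h : G.ReachableIn s a b) : G.ReachableIn s b a := by
  induction h with
  | refl => exact refl
  | tail _ hcd ih => exact (single hcd.1.symm hcd.2.2 hcd.2.1).trans ih

lemma mono_on (hst : s ⊆ t) (hG : ∀ p ∈ s, ∀ q ∈ s, G.Adj p q → G'.Adj p q)
    (h : G.ReachableIn s a b) : G'.ReachableIn t a b :=
  Relation.ReflTransGen.mono (fun _ _ h => ⟨hG _ h.2.1 _ h.2.2 h.1, hst h.2.1, hst h.2.2⟩) _ _ h

lemma mono_set (hst : s ⊆ t) (h : G.ReachableIn s a b) : G.ReachableIn t a b :=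
  h.mono_on hst fun _ _ _ _ h => h

lemma exists_exit (h : G.ReachableIn s a b) (ha : a ∈ t) (hb : b ∉ t) :
    ∃ p ∈ t, ∃ q ∉ t, G.Adj p q ∧ p ∈ s ∧ q ∈ s := by
  induction h with
  | refl => exact absurd ha hb
  | @tail c d _ hcd ih =>
    by_cases hc : c ∈ t
    · exact ⟨c, hc, d, hb, hcd⟩
    · exact ih hc

lemma inter_of_closed (hC : ∀ p q, G.Adj p q → p ∈ s → q ∈ s → p ∈ C → q ∈ C)
    (h : G.ReachableIn s a b) (ha : a ∈ C) : b ∈ C ∧ G.ReachableIn (s ∩ C) a b := by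
  induction h with
  | refl => exact ⟨ha, refl⟩
  | @tail c d _ hcd ih =>
    have hd := hC c d hcd.1 hcd.2.1 hcd.2.2 ih.1
    exact ⟨hd, ih.2.tail hcd.1 ⟨hcd.2.1, ih.1⟩ ⟨hcd.2.2, hd⟩⟩

lemma inter_of_exit_mem_clique (hX : G.IsClique X)
    (hexit : ∀ p q, G.Adj p q → p ∈ F → q ∈ F → p ∈ T → q ∉ T → p ∈ X)
    (h : G.ReachableIn F a b) (ha : a ∈ T) (hb : b ∈ T) : G.ReachableIn (F ∩ T) a b := by
  suffices key : ∀ b', G.ReachableIn F a b' → (b' ∈ T → G.ReachableIn (F ∩ T) a b') ∧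
      (b' ∉ T → ∃ e ∈ X, e ∈ F ∩ T ∧ G.ReachableIn (F ∩ T) a e) from (key b h).1 hb
  intro b' hb'
  induction hb' with
  | refl => exact ⟨fun _ => refl, fun h => absurd ha h⟩
  | @tail c d _ hcd ih =>
    refine ⟨fun hd => ?_, fun hd => ?_⟩
    · by_cases hc : c ∈ T
      · exact (ih.1 hc).tail hcd.1 ⟨hcd.2.1, hc⟩ ⟨hcd.2.2, hd⟩
      obtain ⟨e, heX, he, hae⟩ := ih.2 hc
      have hdX : d ∈ X := hexit d c hcd.1.symm hcd.2.2 hcd.2.1 hd hc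
      rcases eq_or_ne e d with rfl | hed
      · exact hae
      · exact hae.tail (hX heX hdX hed) he ⟨hcd.2.2, hd⟩
    · by_cases hc : c ∈ T
      · exact ⟨c, hexit c d hcd.1 hcd.2.1 hcd.2.2 hc hd, ⟨hcd.2.1, hc⟩, ih.1 hc⟩
      · exact ih.2 hc

lemma adj_of_pair (hab : a ≠ b) (h : G.ReachableIn {a, b} a b) : G.Adj a b := by
  obtain ⟨p, -, q, -, hpq, hp, hq⟩ := h.exists_exit (Set.mem_singleton a) hab.symm
  rcases hp with rfl | rfl <;> rcases hq with rfl | rfl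
  exacts [absurd rfl hpq.ne, hpq, hpq.symm, absurd rfl hpq.ne]

end ReachableIn

namespace ConnectedOn

lemma mono_on (hG : ∀ p ∈ s, ∀ q ∈ s, G.Adj p q → G'.Adj p q)
    (h : G.ConnectedOn s) : G'.ConnectedOn s :=
  ⟨h.1, fun a ha b hb => (h.2 a ha b hb).mono_on subset_rfl hG⟩

lemma mono (hG : G ≤ G') (h : G.ConnectedOn s) : G'.ConnectedOn s :=
  h.mono_on fun _ _ _ _ h => hG h

lemma subset_of_closed (h : G.ConnectedOn s) (hC : ∀ p q, G.Adj p q → p ∈ s → q ∈ s → p ∈ C → q ∈ C)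
    (ha : a ∈ s) (haC : a ∈ C) : s ⊆ C := fun _ hb =>
  ((h.2 a ha _ hb).inter_of_closed hC haC).1

end ConnectedOn

lemma connectedOn_of_forall_reachableIn (ha : a ∈ s) (h : ∀ b ∈ s, G.ReachableIn s b a) :
    G.ConnectedOn s :=
  ⟨⟨a, ha⟩, fun p hp q hq => (h p hp).trans (h q hq).symm⟩

lemma connectedOn_singleton (a : V) : G.ConnectedOn {a} :=
  ⟨⟨a, rfl⟩, by rintro _ rfl _ rfl; exact ReachableIn.refl⟩

lemma connectedOn_iff_connected_induce : G.ConnectedOn s ↔ (G.induce s).Connected := by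
  constructor
  · rintro ⟨⟨a, ha⟩, h⟩
    have : Nonempty s := ⟨⟨a, ha⟩⟩
    refine ⟨fun ⟨p, hp⟩ ⟨q, hq⟩ => ?_⟩
    have key : ∀ r, G.ReachableIn s p r → ∀ hr : r ∈ s, (G.induce s).Reachable ⟨p, hp⟩ ⟨r, hr⟩ := by
      intro r hpr
      induction hpr with
      | refl => exact fun _ => Reachable.refl _
      | @tail c d _ hcd ih => exact fun _ => (ih hcd.2.1).trans (Adj.reachable (by exact hcd.1))
    exact key q (h p hp q hq) hq
  · intro h
    obtain ⟨⟨a, ha⟩⟩ := h.nonempty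
    refine ⟨⟨a, ha⟩, fun p hp q hq => ?_⟩
    have key : ∀ r r' : s, Relation.ReflTransGen (G.induce s).Adj r r' → G.ReachableIn s r r' := by
      intro r r' hrr'
      induction hrr' with
      | refl => exact ReachableIn.refl
      | @tail c d _ hcd ih => exact ih.tail hcd c.2 d.2
    exact key ⟨p, hp⟩ ⟨q, hq⟩ ((reachable_iff_reflTransGen _ _).1 (h.preconnected _ _))

namespace componentIn

lemma subset : G.componentIn s a ⊆ s := fun _ h => h.1

lemma mem_self (ha : a ∈ s) : a ∈ G.componentIn s a := ⟨ha, ReachableIn.refl⟩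

lemma mem_of_adj (hp : b ∈ G.componentIn s a) (hc : c ∈ s) (hbc : G.Adj b c) :
    c ∈ G.componentIn s a :=
  ⟨hc, hp.2.tail hbc hp.1 hc⟩

lemma connectedOn (ha : a ∈ s) : G.ConnectedOn (G.componentIn s a) := by
  refine ⟨⟨a, mem_self ha⟩, fun b hb c hc => ?_⟩
  have hC : ∀ p q, G.Adj p q → p ∈ s → q ∈ s → p ∈ G.componentIn s a → q ∈ G.componentIn s a :=
    fun p q hpq _ hq hp => mem_of_adj hp hq hpq
  exact ((hb.2.symm.trans hc.2).inter_of_closed hC hb).2.mono_set Set.inter_subset_right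

lemma disjoint (hb : b ∈ s) (hba : b ∉ G.componentIn s a) :
    Disjoint (G.componentIn s a) (G.componentIn s b) :=
  Set.disjoint_left.2 fun _ hc hc' => hba ⟨hb, hc.2.trans hc'.2.symm⟩

end componentIn

lemma ConnectedOn.subset_componentIn (h : G.ConnectedOn t) (hts : t ⊆ s) (hb : b ∈ t)
    (hb' : b ∈ G.componentIn s a) : t ⊆ G.componentIn s a :=
  h.subset_of_closed (fun _ _ hpq _ hq hp => componentIn.mem_of_adj hp (hts hq) hpq) hb hb'

lemma exists_notMem_componentIn (hs : s.Nonempty) (h : ¬ G.ConnectedOn s) :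
    ∃ a ∈ s, ∃ b ∈ s, b ∉ G.componentIn s a := by
  by_contra! hc
  exact h ⟨hs, fun a ha b hb => (hc a ha a ha).2.symm.trans (hc a ha b hb).2⟩

lemma ConnectedOn.exists_adj_componentIn (hconn : G.ConnectedOn s) (hv : v ∈ s)
    (ha : a ∈ s \ {v}) : ∃ k ∈ G.componentIn (s \ {v}) a, G.Adj v k := by
  by_contra! h
  have hclosed : ∀ p q, G.Adj p q → p ∈ s → q ∈ s → p ∈ G.componentIn (s \ {v}) a →
      q ∈ G.componentIn (s \ {v}) a := fun p q hpq _ hq hp => by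
    by_cases hqv : q = v
    · exact absurd (hqv ▸ hpq.symm) (h p hp)
    · exact componentIn.mem_of_adj hp ⟨hq, hqv⟩ hpq
  exact (hconn.subset_of_closed hclosed ha.1 (componentIn.mem_self ha) hv).1.2 rfl

lemma exists_componentIn_notMem (hT : T.Nonempty) (hnc : ¬ G.ConnectedOn T) (hxy : G.Adj x y) :
    ∃ c ∈ T, x ∉ G.componentIn T c ∧ y ∉ G.componentIn T c := by
  obtain ⟨a, ha, b, hb, hba⟩ := exists_notMem_componentIn hT hnc
  have hdisj := componentIn.disjoint hb hba
  by_cases hxa : x ∈ G.componentIn T a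
  · refine ⟨b, hb, Set.disjoint_left.1 hdisj hxa, fun hyb => ?_⟩
    exact Set.disjoint_left.1 hdisj (componentIn.mem_of_adj hxa (componentIn.subset hyb) hxy) hyb
  by_cases hya : y ∈ G.componentIn T a
  · refine ⟨b, hb, fun hxb => ?_, Set.disjoint_left.1 hdisj hya⟩
    exact Set.disjoint_left.1 hdisj (componentIn.mem_of_adj hya (componentIn.subset hxb) hxy.symm)
      hxb
  · exact ⟨a, ha, hxa, hya⟩

/-! ### `K₄` minors on a vertex set -/

lemma adj_sup_edge_iff :
    (G ⊔ edge u v).Adj a b ↔ G.Adj a b ∨ (a = u ∧ b = v ∨ a = v ∧ b = u) ∧ a ≠ b := by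
  rw [sup_adj, edge_adj]

lemma adj_sup_edge (h : u ≠ v) : (G ⊔ edge u v).Adj u v :=
  adj_sup_edge_iff.2 (Or.inr ⟨Or.inl ⟨rfl, rfl⟩, h⟩)

lemma adj_of_adj_sup_edge (h : u ∉ s ∨ v ∉ s) (ha : a ∈ s) (hb : b ∈ s)
    (hab : (G ⊔ edge u v).Adj a b) : G.Adj a b := by
  rcases adj_sup_edge_iff.1 hab with hab | ⟨⟨rfl, rfl⟩ | ⟨rfl, rfl⟩, -⟩
  · exact hab
  all_goals tauto

lemma ReachableIn.of_sup_edge (hR : v ∈ F → w ∈ F → G.ReachableIn (F ∪ P) v w)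
    (h : (G ⊔ edge v w).ReachableIn F a b) : G.ReachableIn (F ∪ P) a b := by
  induction h with
  | refl => exact ReachableIn.refl
  | @tail c d _ hcd ih =>
    obtain ⟨hcd, hc, hd⟩ := hcd
    rcases adj_sup_edge_iff.1 hcd with hcd | ⟨⟨rfl, rfl⟩ | ⟨rfl, rfl⟩, -⟩
    · exact ih.tail hcd (Or.inl hc) (Or.inl hd)
    · exact ih.trans (hR hc hd)
    · exact ih.trans (hR hd hc).symm

lemma ConnectedOn.union_of_sup_edge (hF : (G ⊔ edge v w).ConnectedOn F) (hv : v ∈ F)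
    (hP : G.ConnectedOn P) (hp : p ∈ P) (hvp : G.Adj v p) (hq : q ∈ P) (hwq : G.Adj w q) :
    G.ConnectedOn (F ∪ P) := by
  have hPv : ∀ x ∈ P, G.ReachableIn (F ∪ P) x v := fun x hx =>
    ((hP.2 x hx p hp).mono_set Set.subset_union_right).trans
      (ReachableIn.single hvp (Or.inl hv) (Or.inr hp)).symm
  have hvw : v ∈ F → w ∈ F → G.ReachableIn (F ∪ P) v w := fun _ hw =>
    (hPv q hq).symm.trans (ReachableIn.single hwq (Or.inl hw) (Or.inr hq)).symm
  refine connectedOn_of_forall_reachableIn (Or.inl hv) fun x hx => ?_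
  rcases hx with hx | hx
  · exact (hF.2 x hx v hv).of_sup_edge hvw
  · exact hPv x hx

def HasK4MinorOn (G : SimpleGraph V) (s : Set V) : Prop :=
  ∃ f : Fin 4 → Set V, (∀ i, f i ⊆ s) ∧ (∀ i, G.ConnectedOn (f i)) ∧
    Pairwise (fun i j => Disjoint (f i) (f j)) ∧ ∀ i j, i ≠ j → ∃ a ∈ f i, ∃ b ∈ f j, G.Adj a b

namespace HasK4MinorOn

lemma mono_on (hst : s ⊆ t) (hG : ∀ p ∈ s, ∀ q ∈ s, G.Adj p q → G'.Adj p q)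
    (h : G.HasK4MinorOn s) : G'.HasK4MinorOn t := by
  obtain ⟨f, hfs, hfc, hfd, hfa⟩ := h
  refine ⟨f, fun i => (hfs i).trans hst,
    fun i => (hfc i).mono_on fun p hp q hq => hG p (hfs i hp) q (hfs i hq), hfd, fun i j hij => ?_⟩
  obtain ⟨a, ha, b, hb, hab⟩ := hfa i j hij
  exact ⟨a, ha, b, hb, hG a (hfs i ha) b (hfs j hb) hab⟩

lemma mono_set (hst : s ⊆ t) (h : G.HasK4MinorOn s) : G.HasK4MinorOn t :=
  h.mono_on hst fun _ _ _ _ h => h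

lemma of_sup_edge (h : u ∉ s ∨ v ∉ s) (hm : (G ⊔ edge u v).HasK4MinorOn s) :
    G.HasK4MinorOn s :=
  hm.mono_on subset_rfl fun _ ha _ hb => adj_of_adj_sup_edge h ha hb

lemma four_le_ncard [Finite V] (h : G.HasK4MinorOn s) : 4 ≤ s.ncard := by
  obtain ⟨f, hfs, hfc, hfd, -⟩ := h
  choose a ha using fun i => (hfc i).1
  have hinj : Function.Injective a := fun i j hij => by
    by_contra hne
    exact Set.disjoint_left.1 (hfd hne) (ha i) (hij ▸ ha j)
  calc 4 = (Set.range a).ncard := by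
        rw [← Nat.card_coe_set_eq, Nat.card_range_of_injective hinj, Nat.card_eq_fintype_card,
          Fintype.card_fin]
    _ ≤ s.ncard := Set.ncard_le_ncard (Set.range_subset_iff.2 fun i => hfs i (ha i))

/-- The new edge `vw` is replaced by a path through `P`: `P` joins the branch set of `v`. -/
lemma of_sup_edge_of_connectedOn (hm : (G ⊔ edge v w).HasK4MinorOn s) (hP : G.ConnectedOn P)
    (hPs : Disjoint P s) (hv : ∃ p ∈ P, G.Adj v p) (hw : ∃ q ∈ P, G.Adj w q) :
    G.HasK4MinorOn (s ∪ P) := by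
  classical
  obtain ⟨p, hp, hvp⟩ := hv
  obtain ⟨q, hq, hwq⟩ := hw
  obtain ⟨f, hfs, hfc, hfd, hfa⟩ := hm
  by_cases hv : v ∈ ⋃ k, f k
  swap
  · exact ((of_sup_edge (Or.inl hv) ⟨f, Set.subset_iUnion f, hfc, hfd, hfa⟩).mono_set
      (Set.iUnion_subset hfs)).mono_set Set.subset_union_left
  obtain ⟨i, hvi⟩ := Set.mem_iUnion.1 hv
  have hmem : ∀ {k x}, x ∈ f k → x ∈ f i → k = i := fun hk hi => by
    by_contra hne; exact Set.disjoint_left.1 (hfd hne) hk hi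
  set g := Function.update f i (f i ∪ P)
  have hgi : g i = f i ∪ P := Function.update_self i _ f
  have hgk : ∀ {k}, k ≠ i → g k = f k := fun hk => Function.update_of_ne hk _ f
  have hfg : ∀ k, f k ⊆ g k := fun k => by
    rcases eq_or_ne k i with rfl | hk
    · exact hgi ▸ Set.subset_union_left
    · exact (hgk hk).ge
  refine ⟨g, fun k => ?_, fun k => ?_, fun k l hkl => ?_, fun k l hkl => ?_⟩
  · rcases eq_or_ne k i with rfl | hk
    · exact hgi ▸ Set.union_subset_union_left P (hfs k)
    · exact (hgk hk).le.trans ((hfs k).trans Set.subset_union_left)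
  · rcases eq_or_ne k i with rfl | hk
    · exact hgi ▸ (hfc k).union_of_sup_edge hvi hP hp hvp hq hwq
    · rw [hgk hk]
      exact (hfc k).mono_on fun a ha b hb => adj_of_adj_sup_edge
        (Or.inl fun hv => hk (hmem hv hvi)) ha hb
  · have hd : ∀ {k l}, k ≠ l → l ≠ i → Disjoint (g k) (g l) := fun {k l} hkl hl => by
      rw [hgk hl]
      rcases eq_or_ne k i with rfl | hk
      · exact hgi ▸ Set.disjoint_union_left.2 ⟨hfd hkl, hPs.mono_right (hfs l)⟩
      · exact hgk hk ▸ hfd hkl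
    rcases eq_or_ne l i with hl | hl
    · exact (hd hkl.symm (hl ▸ hkl)).symm
    · exact hd hkl hl
  · obtain ⟨a, ha, b, hb, hab⟩ := hfa k l hkl
    rcases adj_sup_edge_iff.1 hab with hab | ⟨⟨rfl, rfl⟩ | ⟨rfl, rfl⟩, -⟩
    · exact ⟨a, hfg k ha, b, hfg l hb, hab⟩
    · obtain rfl := hmem ha hvi
      exact ⟨q, hgi ▸ Or.inr hq, b, hfg l hb, hwq.symm⟩
    · obtain rfl := hmem hb hvi
      exact ⟨a, hfg k ha, q, hgi ▸ Or.inr hq, hwq⟩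

end HasK4MinorOn

lemma hasK4MinorOn_univ_iff : G.HasK4MinorOn Set.univ ↔ G.HasMinor (⊤ : SimpleGraph (Fin 4)) := by
  simp only [HasK4MinorOn, HasMinor, connectedOn_iff_connected_induce, Set.subset_univ,
    implies_true, true_and, top_adj, ne_eq]
  constructor
  · rintro ⟨f, hc, hd, ha⟩
    exact ⟨f, fun i => (hc i).nonempty.elim fun x => ⟨x, x.2⟩, hc, fun i j => @hd i j, ha⟩
  · rintro ⟨f, -, hc, hd, ha⟩
    exact ⟨f, hc, fun i j => hd i j, ha⟩

lemma IsClique.hasK4MinorOn [Finite V] (h : G.IsClique S) (h4 : 4 ≤ S.ncard) :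
    G.HasK4MinorOn S := by
  classical
  have : Fintype V := Fintype.ofFinite V
  obtain ⟨e⟩ : Nonempty (Fin 4 ↪ S) := Function.Embedding.nonempty_of_card_le <| by
    rwa [Fintype.card_fin, ← Nat.card_eq_fintype_card, Nat.card_coe_set_eq]
  have hne : ∀ {i j}, i ≠ j → (e i : V) ≠ e j := fun hij h => hij (e.injective (Subtype.ext h))
  exact ⟨fun i => {(e i : V)}, fun i => Set.singleton_subset_iff.2 (e i).2,
    fun i => connectedOn_singleton _, fun i j hij => Set.disjoint_singleton.2 (hne hij),
    fun i j hij => ⟨e i, rfl, e j, rfl, h (e i).2 (e j).2 (hne hij)⟩⟩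

lemma branchSet_not_subset_singleton {a₁ a₂ : V} {f : Fin 4 → Set V} (hfs : ∀ i, f i ⊆ s)
    (hfd : Pairwise fun i j => Disjoint (f i) (f j))
    (hfa : ∀ i j, i ≠ j → ∃ a ∈ f i, ∃ b ∈ f j, G.Adj a b)
    (hb : ∀ x ∈ s, G.Adj b x → x = a₁ ∨ x = a₂) (i : Fin 4) : ¬ f i ⊆ {b} := by
  intro hi
  have huniq : ∀ {x j k}, x ∈ f j → x ∈ f k → j = k := fun hj hk => by
    by_contra hne; exact Set.disjoint_left.1 (hfd hne) hj hk
  have hnbr : ∀ j, j ≠ i → a₁ ∈ f j ∨ a₂ ∈ f j := fun j hj => by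
    obtain ⟨x, hx, y, hy, hxy⟩ := hfa i j hj.symm
    obtain rfl : x = b := hi hx
    rcases hb y (hfs j hy) hxy with rfl | rfl <;> simp [hy]
  have hthree : ∀ i : Fin 4, ∃ j k l : Fin 4,
      j ≠ k ∧ j ≠ l ∧ k ≠ l ∧ j ≠ i ∧ k ≠ i ∧ l ≠ i := by decide
  obtain ⟨j, k, l, hjk, hjl, hkl, hj, hk, hl⟩ := hthree i
  rcases hnbr j hj with h₁ | h₁ <;> rcases hnbr k hk with h₂ | h₂ <;>
    rcases hnbr l hl with h₃ | h₃ <;>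
    first
      | exact hjk (huniq h₁ h₂) | exact hjl (huniq h₁ h₃) | exact hkl (huniq h₂ h₃)

/-- Deleting `b` from its branch set keeps it connected, since the neighbours of `b` form a
clique. -/
lemma HasK4MinorOn.diff_singleton {a₁ a₂ : V} (hm : G.HasK4MinorOn s)
    (hX : G.IsClique ({a₁, a₂} : Set V)) (hb : ∀ x ∈ s, G.Adj b x → x = a₁ ∨ x = a₂) :
    G.HasK4MinorOn (s \ {b}) := by
  obtain ⟨f, hfs, hfc, hfd, hfa⟩ := hm
  have huniq : ∀ {x j k}, x ∈ f j → x ∈ f k → j = k := fun hj hk => by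
    by_contra hne; exact Set.disjoint_left.1 (hfd hne) hj hk
  have hsingle := branchSet_not_subset_singleton hfs hfd hfa hb
  have hexit : ∀ k, ∀ x y, G.Adj x y → x ∈ f k → y ∈ f k → x ∈ ({b}ᶜ : Set V) →
      y ∉ ({b}ᶜ : Set V) → x ∈ ({a₁, a₂} : Set V) := by
    intro k x y hxy hx _ _ hy
    rw [Set.mem_compl_iff, not_not, Set.mem_singleton_iff] at hy
    subst hy
    exact hb x (hfs k hx) hxy.symm
  have hnbr : ∀ k, b ∈ f k → ∃ x ∈ f k \ {b}, x ∈ ({a₁, a₂} : Set V) := fun k hbk => by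
    obtain ⟨c, hc, hcb⟩ := Set.not_subset.1 (hsingle k)
    obtain ⟨x, hx, y, hy, hxy, hxk, hyk⟩ :=
      ((hfc k).2 c hc b hbk).exists_exit (t := {b}ᶜ) hcb (by simp)
    exact ⟨x, ⟨hxk, hx⟩, hexit k x y hxy hxk hyk hx hy⟩
  refine ⟨fun k => f k \ {b}, fun k => Set.sdiff_subset_sdiff_left (hfs k), fun k => ⟨?_, ?_⟩,
    fun k l hkl => (hfd hkl).mono Set.sdiff_subset Set.sdiff_subset, fun k l hkl => ?_⟩
  · obtain ⟨c, hc, hcb⟩ := Set.not_subset.1 (hsingle k)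
    exact ⟨c, hc, hcb⟩
  · intro x hx y hy
    exact ((hfc k).2 x hx.1 y hy.1).inter_of_exit_mem_clique hX (hexit k) hx.2 hy.2
  · obtain ⟨x, hx, y, hy, hxy⟩ := hfa k l hkl
    by_cases hxb : x = b
    · subst hxb
      obtain ⟨x', hx', hx'X⟩ := hnbr k hx
      have hyX := hb y (hfs l hy) hxy
      refine ⟨x', hx', y, ⟨hy, fun h => hxy.ne h.symm⟩, hX hx'X (by simpa using hyX) ?_⟩
      exact fun h => hkl (huniq hx'.1 (h ▸ hy))
    by_cases hyb : y = b
    · subst hyb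
      obtain ⟨y', hy', hy'X⟩ := hnbr l hy
      have hxX := hb x (hfs k hx) hxy.symm
      refine ⟨x, ⟨hx, hxb⟩, y', hy', hX (by simpa using hxX) hy'X ?_⟩
      exact fun h => hkl (huniq hx (h ▸ hy'.1))
    · exact ⟨x, ⟨hx, hxb⟩, y, ⟨hy, hyb⟩, hxy⟩

/-! ### Separations by two vertices -/

structure IsTwoSeparation (G : SimpleGraph V) (s s₁ s₂ : Set V) (v w : V) : Prop where
  subset_union : s ⊆ s₁ ∪ s₂
  inter_subset : s₁ ∩ s₂ ⊆ {v, w}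
  mem_left : v ∈ s₁ ∧ w ∈ s₁
  mem_right : v ∈ s₂ ∧ w ∈ s₂
  not_adj : ∀ p ∈ s₁, ∀ q ∈ s₂, p ∉ ({v, w} : Set V) → q ∉ ({v, w} : Set V) → ¬ G.Adj p q

namespace IsTwoSeparation

lemma symm (h : G.IsTwoSeparation s s₁ s₂ v w) : G.IsTwoSeparation s s₂ s₁ v w :=
  ⟨Set.union_comm s₁ s₂ ▸ h.subset_union, Set.inter_comm s₁ s₂ ▸ h.inter_subset, h.mem_right,
    h.mem_left, fun p hp q hq hpX hqX hpq => h.not_adj q hq p hp hqX hpX hpq.symm⟩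

lemma sup_edge (h : G.IsTwoSeparation s s₁ s₂ v w) (ha : a ∈ s₁) (hb : b ∈ s₁) :
    (G ⊔ edge a b).IsTwoSeparation s s₁ s₂ v w := by
  refine ⟨h.subset_union, h.inter_subset, h.mem_left, h.mem_right, fun p hp q hq hpX hqX hpq => ?_⟩
  rcases adj_sup_edge_iff.1 hpq with hpq | ⟨⟨rfl, rfl⟩ | ⟨rfl, rfl⟩, -⟩
  · exact h.not_adj p hp q hq hpX hqX hpq
  · exact hqX (h.inter_subset ⟨hb, hq⟩)
  · exact hqX (h.inter_subset ⟨ha, hq⟩)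

lemma mem_right_of_notMem_left (h : G.IsTwoSeparation s s₁ s₂ v w) (hp : p ∈ s)
    (hp₁ : p ∉ s₁) : p ∈ s₂ ∧ p ∉ ({v, w} : Set V) := by
  refine ⟨(h.subset_union hp).resolve_left hp₁, ?_⟩
  rintro (rfl | rfl)
  exacts [hp₁ h.mem_left.1, hp₁ h.mem_left.2]

lemma subset_or_subset (h : G.IsTwoSeparation s s₁ s₂ v w) {F : Set V} (hF : G.ConnectedOn F)
    (hFs : F ⊆ s) (hv : v ∉ F) (hw : w ∉ F) : F ⊆ s₁ ∨ F ⊆ s₂ := by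
  have hX : ∀ x ∈ F, x ∉ ({v, w} : Set V) := by
    rintro x hx (rfl | rfl) <;> contradiction
  refine or_iff_not_imp_left.2 fun hF₁ x hx => ?_
  obtain ⟨y, hy, hy₁⟩ := Set.not_subset.1 hF₁
  by_contra hx₂
  have hx₁ : x ∈ s₁ := (h.subset_union (hFs hx)).resolve_right hx₂
  obtain ⟨p, hp, q, hq, hpq, hpF, hqF⟩ := (hF.2 x hx y hy).exists_exit hx₁ hy₁
  exact h.not_adj p hp q (h.mem_right_of_notMem_left (hFs hqF) hq).1 (hX p hpF) (hX q hqF) hpq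

lemma connectedOn_inter_left (h : G.IsTwoSeparation s s₁ s₂ v w) (hvw : G.Adj v w)
    (hF : G.ConnectedOn F) (hFs : F ⊆ s) (hne : (F ∩ s₁).Nonempty) : G.ConnectedOn (F ∩ s₁) := by
  refine ⟨hne, fun x hx y hy => (hF.2 x hx.1 y hy.1).inter_of_exit_mem_clique
    (isClique_pair.2 fun _ => hvw) (fun p q hpq _ hq hp₁ hq₁ => ?_) hx.2 hy.2⟩
  by_contra hpX
  obtain ⟨hq₂, hqX⟩ := h.mem_right_of_notMem_left (hFs hq) hq₁
  exact h.not_adj p hp₁ q hq₂ hpX hqX hpq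

lemma hasK4MinorOn_left (h : G.IsTwoSeparation s s₁ s₂ v w) (hvw : G.Adj v w)
    {f : Fin 4 → Set V} (hfs : ∀ i, f i ⊆ s) (hfc : ∀ i, G.ConnectedOn (f i))
    (hfd : Pairwise fun i j => Disjoint (f i) (f j))
    (hfa : ∀ i j, i ≠ j → ∃ a ∈ f i, ∃ b ∈ f j, G.Adj a b)
    (hpure : ∀ i, v ∉ f i → w ∉ f i → f i ⊆ s₁) : G.HasK4MinorOn s₁ := by
  have hX : G.IsClique ({v, w} : Set V) := isClique_pair.2 fun _ => hvw
  have hX₁ : ({v, w} : Set V) ⊆ s₁ := by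
    rintro x (rfl | rfl); exacts [h.mem_left.1, h.mem_left.2]
  have hhub : ∀ i, ¬ f i ⊆ s₁ → ∃ e ∈ f i, e ∈ ({v, w} : Set V) := fun i hi => by
    by_contra! hne
    exact hi (hpure i (fun hv => hne v hv (Or.inl rfl)) fun hw => hne w hw (Or.inr rfl))
  have hmeet : ∀ i j a b, a ∈ f i → b ∈ f j → G.Adj a b → a ∉ s₁ →
      (∃ e ∈ f i, e ∈ ({v, w} : Set V)) ∧ ∃ e ∈ f j, e ∈ ({v, w} : Set V) := by
    intro i j a b ha hb hab ha₁
    refine ⟨hhub i fun hi => ha₁ (hi ha), ?_⟩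
    by_cases hb₁ : b ∈ s₁
    · by_contra! hne
      obtain ⟨ha₂, haX⟩ := h.mem_right_of_notMem_left (hfs i ha) ha₁
      exact h.not_adj b hb₁ a ha₂ (fun hbX => hne b hb hbX) haX hab.symm
    · exact hhub j fun hj => hb₁ (hj hb)
  refine ⟨fun i => f i ∩ s₁, fun i => Set.inter_subset_right,
    fun i => h.connectedOn_inter_left hvw (hfc i) (hfs i) ?_,
    fun i j hij => (hfd hij).mono Set.inter_subset_left Set.inter_subset_left, fun i j hij => ?_⟩
  · by_cases hi : f i ⊆ s₁
    · obtain ⟨x, hx⟩ := (hfc i).1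
      exact ⟨x, hx, hi hx⟩
    · obtain ⟨e, he, heX⟩ := hhub i hi
      exact ⟨e, he, hX₁ heX⟩
  · obtain ⟨a, ha, b, hb, hab⟩ := hfa i j hij
    by_cases hin : a ∈ s₁ ∧ b ∈ s₁
    · exact ⟨a, ⟨ha, hin.1⟩, b, ⟨hb, hin.2⟩, hab⟩
    obtain ⟨⟨e, he, heX⟩, e', he', he'X⟩ : (∃ e ∈ f i, e ∈ ({v, w} : Set V)) ∧
        ∃ e ∈ f j, e ∈ ({v, w} : Set V) := by
      by_cases ha₁ : a ∈ s₁
      · exact (hmeet j i b a hb ha hab.symm fun hb₁ => hin ⟨ha₁, hb₁⟩).symm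
      · exact hmeet i j a b ha hb hab ha₁
    exact ⟨e, ⟨he, hX₁ heX⟩, e', ⟨he', hX₁ he'X⟩,
      hX heX he'X fun hee' => Set.disjoint_left.1 (hfd hij) he (hee' ▸ he')⟩

/-- The branch sets avoiding `{v, w}` lie on one common side, since two of them on different
sides could not be adjacent. -/
lemma hasK4MinorOn (h : G.IsTwoSeparation s s₁ s₂ v w) (hvw : G.Adj v w)
    (hm : G.HasK4MinorOn s) : G.HasK4MinorOn s₁ ∨ G.HasK4MinorOn s₂ := by
  obtain ⟨f, hfs, hfc, hfd, hfa⟩ := hm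
  by_cases hall : ∀ i, v ∉ f i → w ∉ f i → f i ⊆ s₁
  · exact Or.inl (h.hasK4MinorOn_left hvw hfs hfc hfd hfa hall)
  push Not at hall
  obtain ⟨i, hvi, hwi, hi₁⟩ := hall
  have hi₂ := (h.subset_or_subset (hfc i) (hfs i) hvi hwi).resolve_left hi₁
  refine Or.inr (h.symm.hasK4MinorOn_left hvw hfs hfc hfd hfa fun j hvj hwj => ?_)
  refine (h.subset_or_subset (hfc j) (hfs j) hvj hwj).resolve_left fun hj₁ => ?_
  have hij : i ≠ j := by rintro rfl; exact hi₁ hj₁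
  obtain ⟨a, ha, b, hb, hab⟩ := hfa i j hij
  have hX : ∀ {k x}, v ∉ f k → w ∉ f k → x ∈ f k → x ∉ ({v, w} : Set V) := by
    rintro k x hv hw hx (rfl | rfl) <;> contradiction
  exact h.not_adj b (hj₁ hb) a (hi₂ ha) (hX hvj hwj hb) (hX hvi hwi ha) hab.symm

lemma adj_mem (h : G.IsTwoSeparation s s₁ s₂ v w) (hx : x ∈ s) (hy : y ∈ s)
    (hxy : G.Adj x y) : x ∈ s₁ ∧ y ∈ s₁ ∨ x ∈ s₂ ∧ y ∈ s₂ := by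
  by_contra! hne
  have hX : ∀ {z}, z ∈ s → z ∉ s₁ ∨ z ∉ s₂ → z ∉ ({v, w} : Set V) := fun hz hz' => by
    rintro (rfl | rfl)
    exacts [hz'.elim (· h.mem_left.1) (· h.mem_right.1),
      hz'.elim (· h.mem_left.2) (· h.mem_right.2)]
  rcases h.subset_union hx with hx₁ | hx₂
  · have hy₁ : y ∉ s₁ := hne.1 hx₁
    have hy₂ : y ∈ s₂ := (h.subset_union hy).resolve_left hy₁
    have hx₂ : x ∉ s₂ := fun hx₂ => hne.2 hx₂ hy₂
    exact h.not_adj x hx₁ y hy₂ (hX hx (Or.inr hx₂)) (hX hy (Or.inl hy₁)) hxy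
  · have hy₂ : y ∉ s₂ := hne.2 hx₂
    have hy₁ : y ∈ s₁ := (h.subset_union hy).resolve_right hy₂
    have hx₁ : x ∉ s₁ := fun hx₁ => hne.1 hx₁ hy₁
    exact h.not_adj y hy₁ x hx₂ (hX hy (Or.inr hy₂)) (hX hx (Or.inl hx₁)) hxy.symm

end IsTwoSeparation

lemma isTwoSeparation_of_closed
    (hK : ∀ p ∈ K, ∀ q ∈ s, G.Adj p q → p ∉ ({v, w} : Set V) → q ∉ ({v, w} : Set V) → q ∈ K) :
    G.IsTwoSeparation s (K ∪ {v, w}) ((s \ K) ∪ {v, w}) v w := by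
  refine ⟨fun x hx => ?_, ?_, ⟨Or.inr (Or.inl rfl), Or.inr (Or.inr rfl)⟩,
    ⟨Or.inr (Or.inl rfl), Or.inr (Or.inr rfl)⟩, ?_⟩
  · by_cases hxK : x ∈ K
    exacts [Or.inl (Or.inl hxK), Or.inr (Or.inl ⟨hx, hxK⟩)]
  · rintro x ⟨hx | hx, hx' | hx'⟩
    exacts [absurd hx hx'.2, hx', hx, hx]
  · rintro p (hp | hp) q (hq | hq) hpX hqX hpq
    · exact hq.2 (hK p hp q hq.1 hpq hpX hqX)
    all_goals contradiction

/-! ### Contractible edges of 3-connected sets -/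

/-- This is 3-connectivity only when `4 ≤ S.ncard`: every `S` with three vertices satisfies it. -/
def ThreeConnectedOn (G : SimpleGraph V) (S : Set V) : Prop :=
  ∀ x ∈ S, ∀ y ∈ S, x ≠ y → G.ConnectedOn (S \ {x, y})

/-- The contraction of the edge `xy` onto `x`. The vertex `y` is not removed from the type:
the contraction is meant to be restricted to vertex sets not containing `y`. -/
def contractEdge (G : SimpleGraph V) (x y : V) : SimpleGraph V where
  Adj a b := a ≠ b ∧ (G.Adj a b ∨ a = x ∧ G.Adj y b ∨ b = x ∧ G.Adj a y)
  symm := ⟨fun a b => by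
    rintro ⟨hne, h | ⟨rfl, h⟩ | ⟨rfl, h⟩⟩
    exacts [⟨hne.symm, Or.inl h.symm⟩, ⟨hne.symm, Or.inr (Or.inr ⟨rfl, h.symm⟩)⟩,
      ⟨hne.symm, Or.inr (Or.inl ⟨rfl, h.symm⟩)⟩]⟩
  loopless := ⟨fun _ h => h.1 rfl⟩

lemma le_contractEdge : G ≤ G.contractEdge x y := fun _ _ h => ⟨h.ne, Or.inl h⟩

lemma adj_of_contractEdge_adj (ha : a ≠ x) (hb : b ≠ x) (h : (G.contractEdge x y).Adj a b) :
    G.Adj a b := by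
  rcases h.2 with h | ⟨rfl, _⟩ | ⟨rfl, _⟩
  exacts [h, absurd rfl ha, absurd rfl hb]

lemma ReachableIn.of_contractEdge (hxy : G.Adj x y)
    (h : (G.contractEdge x y).ReachableIn F a b) : G.ReachableIn (insert y F) a b := by
  induction h with
  | refl => exact ReachableIn.refl
  | @tail c d _ hcd ih =>
    obtain ⟨⟨-, h | ⟨rfl, h⟩ | ⟨rfl, h⟩⟩, hc, hd⟩ := hcd
    · exact ih.tail h (Or.inr hc) (Or.inr hd)
    · exact (ih.tail hxy (Or.inr hc) (Or.inl rfl)).tail h (Or.inl rfl) (Or.inr hd)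
    · exact (ih.tail h (Or.inr hc) (Or.inl rfl)).tail hxy.symm (Or.inl rfl) (Or.inr hd)

lemma ConnectedOn.contractEdge (h : G.ConnectedOn T) (hx : x ∈ T) (hxy : x ≠ y) :
    (G.contractEdge x y).ConnectedOn (T \ {y}) := by
  classical
  let φ : V → V := fun z => if z = y then x else z
  have hφ : ∀ z ∈ T, φ z ∈ T \ {y} := fun z hz => by
    by_cases hzy : z = y
    · simp only [φ, hzy, if_true]; exact ⟨hx, hxy⟩
    · simp only [φ, hzy, if_false]; exact ⟨hz, hzy⟩
  have key : ∀ a b, G.ReachableIn T a b →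
      (G.contractEdge x y).ReachableIn (T \ {y}) (φ a) (φ b) := by
    intro a b hab
    induction hab with
    | refl => exact ReachableIn.refl
    | @tail c d _ hcd ih =>
      by_cases hφcd : φ c = φ d
      · rwa [← hφcd]
      refine ih.tail ⟨hφcd, ?_⟩ (hφ c hcd.2.1) (hφ d hcd.2.2)
      by_cases hcy : c = y <;> by_cases hdy : d = y <;> simp only [φ, hcy, hdy, if_true, if_false]
      · exact absurd (hcy.trans hdy.symm) hcd.1.ne
      · exact Or.inr (Or.inl ⟨trivial, hcy ▸ hcd.1⟩)
      · exact Or.inr (Or.inr ⟨trivial, hdy ▸ hcd.1⟩)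
      · exact Or.inl hcd.1
  refine connectedOn_of_forall_reachableIn (a := x) ⟨hx, hxy⟩ fun b hb => ?_
  have hby : b ≠ y := hb.2
  simpa [φ, hby, hxy] using key b x (h.2 b hb.1 x hx)

lemma HasK4MinorOn.of_contractEdge (hxy : G.Adj x y) (hy : y ∉ s)
    (h : (G.contractEdge x y).HasK4MinorOn s) : G.HasK4MinorOn (insert y s) := by
  classical
  obtain ⟨f, hfs, hfc, hfd, hfa⟩ := h
  have hyf : ∀ k, y ∉ f k := fun k hk => hy (hfs k hk)
  set g := fun k => if x ∈ f k then insert y (f k) else f k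
  have hfg : ∀ k, f k ⊆ g k := fun k => by
    by_cases hx : x ∈ f k <;> simp only [g, hx, if_true, if_false]
    exacts [Set.subset_insert _ _, subset_rfl]
  have hyg : ∀ k, x ∈ f k → y ∈ g k := fun k hx => by simp [g, hx]
  refine ⟨g, fun k => ?_, fun k => ?_, fun k l hkl => ?_, fun k l hkl => ?_⟩
  · by_cases hx : x ∈ f k <;> simp only [g, hx, if_true, if_false]
    exacts [Set.insert_subset_insert (hfs k), (hfs k).trans (Set.subset_insert _ _)]
  · by_cases hx : x ∈ f k <;> simp only [g, hx, if_true, if_false]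
    · refine connectedOn_of_forall_reachableIn (Set.mem_insert_of_mem _ hx) fun a ha => ?_
      rcases ha with rfl | ha
      · exact ReachableIn.single hxy.symm (Set.mem_insert _ _) (Set.mem_insert_of_mem _ hx)
      · exact ((hfc k).2 a ha x hx).of_contractEdge hxy
    · exact (hfc k).mono_on fun a ha b hb => adj_of_contractEdge_adj
        (fun h : a = x => hx (h ▸ ha)) (fun h : b = x => hx (h ▸ hb))
  · have hd := hfd hkl
    have hins : ∀ {k l}, Disjoint (f k) (f l) → Disjoint (insert y (f k)) (f l) :=
      fun hd => Set.disjoint_insert_left.2 ⟨hyf _, hd⟩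
    show Disjoint (g k) (g l)
    by_cases hxk : x ∈ f k <;> by_cases hxl : x ∈ f l <;> simp only [g, hxk, hxl, if_true, if_false]
    · exact absurd hxl (Set.disjoint_left.1 hd hxk)
    · exact hins hd
    · exact (hins hd.symm).symm
    · exact hd
  · obtain ⟨a, ha, b, hb, hab⟩ := hfa k l hkl
    rcases hab.2 with h | ⟨rfl, h⟩ | ⟨rfl, h⟩
    · exact ⟨a, hfg k ha, b, hfg l hb, h⟩
    · exact ⟨y, hyg k ha, b, hfg l hb, h⟩
    · exact ⟨a, hfg k ha, y, hyg l hb, h⟩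

namespace ThreeConnectedOn

lemma isClique [Finite V] (h : G.ThreeConnectedOn S) (h4 : S.ncard = 4) : G.IsClique S := by
  intro u hu t ht hut
  have hsub : ({u, t} : Set V) ⊆ S := by rintro z (rfl | rfl); exacts [hu, ht]
  obtain ⟨x, y, hxy, hset⟩ := Set.ncard_eq_two.1 (show (S \ {u, t}).ncard = 2 by
    rw [Set.ncard_sdiff hsub, h4, Set.ncard_pair hut])
  have hmem : ∀ z, z ∈ S \ {u, t} ↔ z = x ∨ z = y := fun z => by rw [hset]; rfl
  have hx := (hmem x).2 (Or.inl rfl)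
  have hy := (hmem y).2 (Or.inr rfl)
  have heq : S \ {x, y} = {u, t} := by
    ext z
    have := hmem z
    simp only [Set.mem_sdiff, Set.mem_insert_iff, Set.mem_singleton_iff] at this hx hy ⊢
    constructor
    · rintro ⟨hz, hzxy⟩; tauto
    · rintro (rfl | rfl) <;> refine ⟨‹_›, ?_⟩ <;> rintro (rfl | rfl) <;> tauto
  refine ReachableIn.adj_of_pair hut ?_
  have := (h x hx.1 y hy.1 hxy).2 u (heq ▸ Or.inl rfl) t (heq ▸ Or.inr rfl)
  rwa [heq] at this

lemma exists_adj [Finite V] (h : G.ThreeConnectedOn S) (h4 : 4 ≤ S.ncard) :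
    ∃ x ∈ S, ∃ y ∈ S, G.Adj x y := by
  obtain ⟨p, hp⟩ := Set.nonempty_of_ncard_ne_zero (by omega : S.ncard ≠ 0)
  obtain ⟨q, ⟨hq, hqp⟩, -⟩ := Set.nonempty_diff_triple_of_four_le_ncard h4 p p p
  obtain ⟨r, hr, -⟩ := Set.nonempty_diff_triple_of_four_le_ncard h4 p q q
  obtain ⟨t, ht, htr⟩ := Set.nonempty_diff_triple_of_four_le_ncard h4 p q r
  obtain ⟨a, -, b, -, hab, ha, hb⟩ :=
    ((h p hp q hq fun h => hqp (by simp [h])).2 r hr t ht).exists_exit (Set.mem_singleton r) htr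
  exact ⟨a, ha.1, b, hb.1, hab⟩

lemma exists_not_connectedOn_of_contractEdge (h : G.ThreeConnectedOn S) (hx : x ∈ S)
    (hxy : x ≠ y) (hc : ¬ (G.contractEdge x y).ThreeConnectedOn (S \ {y})) :
    ∃ z ∈ S, z ≠ x ∧ z ≠ y ∧ ¬ G.ConnectedOn ((S \ {x, y}) \ {z}) := by
  simp only [ThreeConnectedOn, not_forall] at hc
  obtain ⟨p, hp, q, hq, hpq, hnc⟩ := hc
  have key : ∀ z ∈ S \ {y}, z ≠ x → ¬ (G.contractEdge x y).ConnectedOn ((S \ {y}) \ {x, z}) →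
      ∃ z ∈ S, z ≠ x ∧ z ≠ y ∧ ¬ G.ConnectedOn ((S \ {x, y}) \ {z}) := by
    refine fun z hz hzx hnc => ⟨z, hz.1, hzx, hz.2, fun hG => hnc ?_⟩
    have heq : (S \ {y}) \ {x, z} = (S \ {x, y}) \ {z} := by
      ext; simp only [Set.mem_sdiff, Set.mem_insert_iff, Set.mem_singleton_iff]; tauto
    exact heq ▸ hG.mono le_contractEdge
  by_cases hxp : x = p
  · subst hxp; exact key q hq (Ne.symm hpq) hnc
  by_cases hxq : x = q
  · subst hxq; exact key p hp hpq (by rwa [Set.pair_comm] at hnc)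
  refine absurd ?_ hnc
  rw [Set.sdiff_sdiff_comm]
  refine (h p hp.1 q hq.1 hpq).contractEdge ⟨hx, ?_⟩ hxy
  rintro (h | h); exacts [hxp h, hxq h]

/-- The descent step of the contractible-edge argument: go from `z` to a neighbour `m` in the
component `C`, extend the edge `zm` to a separating triple `{z, m, w}`, and take a component of
it avoiding the edge `xy`; it lies in `C` and misses `m`. -/
lemma exists_componentIn_ssubset [Finite V] (h : G.ThreeConnectedOn S) (h4 : 4 ≤ S.ncard)
    (hsep : ∀ x ∈ S, ∀ y ∈ S, G.Adj x y →
      ∃ z ∈ S, z ≠ x ∧ z ≠ y ∧ ¬ G.ConnectedOn ((S \ {x, y}) \ {z}))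
    (hx : x ∈ S) (hy : y ∈ S) (hz : z ∈ S) (hxy : G.Adj x y) (hzx : z ≠ x) (hzy : z ≠ y)
    (hc : c ∈ (S \ {x, y}) \ {z}) :
    ∃ x' ∈ S, ∃ y' ∈ S, ∃ z' ∈ S, G.Adj x' y' ∧ z' ≠ x' ∧ z' ≠ y' ∧
      ∃ c' ∈ (S \ {x', y'}) \ {z'},
        G.componentIn ((S \ {x', y'}) \ {z'}) c' ⊂ G.componentIn ((S \ {x, y}) \ {z}) c := by
  set C := G.componentIn ((S \ {x, y}) \ {z}) c
  obtain ⟨m, hmC, hzm⟩ := (h x hx y hy hxy.ne).exists_adj_componentIn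
    ⟨hz, by rintro (h | h); exacts [hzx h, hzy h]⟩ hc
  have hm : m ∈ S := hmC.1.1.1
  obtain ⟨w, hw, hwz, hwm, hnc⟩ := hsep z hz m hm hzm
  obtain ⟨c', hc', hxD, hyD⟩ :=
    exists_componentIn_notMem (Set.nonempty_diff_triple_of_four_le_ncard h4 z m w) hnc hxy
  set D := G.componentIn ((S \ {z, m}) \ {w}) c'
  have hDT : D ⊆ (S \ {x, y}) \ {z} := fun d hd => by
    obtain ⟨⟨hdS, hdzm⟩, -⟩ := hd.1
    refine ⟨⟨hdS, ?_⟩, fun h => hdzm (Or.inl h)⟩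
    rintro (rfl | rfl); exacts [hxD hd, hyD hd]
  have heq : (S \ {z, w}) \ {m} = (S \ {z, m}) \ {w} := by
    ext; simp only [Set.mem_sdiff, Set.mem_insert_iff, Set.mem_singleton_iff]; tauto
  obtain ⟨d, hdD, hmd⟩ : ∃ d ∈ D, G.Adj m d := by
    have := (h z hz w hw hwz.symm).exists_adj_componentIn (v := m) (a := c')
      ⟨hm, by rintro (h | h); exacts [hzm.ne h.symm, hwm h.symm]⟩ (heq ▸ hc')
    rwa [heq] at this
  have hDC : D ⊆ C := (componentIn.connectedOn hc').subset_componentIn hDT hdD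
    (componentIn.mem_of_adj hmC (hDT hdD) hmd)
  exact ⟨z, hz, m, hm, w, hw, hzm, hwz, hwm, c', hc', hDC,
    fun hCD => (hCD hmC).1.1.2 (Or.inr rfl)⟩

lemma exists_contractible_edge [Finite V] (h : G.ThreeConnectedOn S) (h4 : 4 ≤ S.ncard) :
    ∃ x ∈ S, ∃ y ∈ S, G.Adj x y ∧ (G.contractEdge x y).ThreeConnectedOn (S \ {y}) := by
  by_contra! hnot
  have hsep : ∀ x ∈ S, ∀ y ∈ S, G.Adj x y →
      ∃ z ∈ S, z ≠ x ∧ z ≠ y ∧ ¬ G.ConnectedOn ((S \ {x, y}) \ {z}) := fun x hx y hy hxy =>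
    h.exists_not_connectedOn_of_contractEdge hx hxy.ne (hnot x hx y hy hxy)
  have hdesc : ∀ n, ∀ x ∈ S, ∀ y ∈ S, ∀ z ∈ S, G.Adj x y → z ≠ x → z ≠ y →
      ∀ c ∈ (S \ {x, y}) \ {z}, (G.componentIn ((S \ {x, y}) \ {z}) c).ncard ≠ n := by
    intro n
    induction n using Nat.strong_induction_on with
    | _ n ih =>
      rintro x hx y hy z hz hxy hzx hzy c hc rfl
      obtain ⟨x', hx', y', hy', z', hz', hxy', hzx', hzy', c', hc', hlt⟩ :=
        h.exists_componentIn_ssubset h4 hsep hx hy hz hxy hzx hzy hc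
      exact ih _ (Set.ncard_lt_ncard hlt) x' hx' y' hy' z' hz' hxy' hzx' hzy' c' hc' rfl
  obtain ⟨x, hx, y, hy, hxy⟩ := h.exists_adj h4
  obtain ⟨z, hz, hzx, hzy, -⟩ := hsep x hx y hy hxy
  obtain ⟨c, hc⟩ := Set.nonempty_diff_triple_of_four_le_ncard h4 x y z
  exact hdesc _ x hx y hy z hz hxy hzx hzy c hc rfl

theorem hasK4MinorOn [Finite V] (h : G.ThreeConnectedOn S) (h4 : 4 ≤ S.ncard) :
    G.HasK4MinorOn S := by
  obtain ⟨n, hn⟩ : ∃ n, S.ncard = n := ⟨_, rfl⟩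
  induction n using Nat.strong_induction_on generalizing G S with
  | _ n ih =>
  rcases h4.eq_or_lt with h4 | h5
  · exact (h.isClique h4.symm).hasK4MinorOn h4.le
  obtain ⟨x, hx, y, hy, hxy, hc⟩ := h.exists_contractible_edge h4
  have hcard : (S \ {y}).ncard = n - 1 := by rw [Set.ncard_sdiff_singleton_of_mem hy, hn]
  have hm := (ih (n - 1) (by omega) hc (by omega) hcard).of_contractEdge hxy fun h => h.2 rfl
  rwa [Set.insert_sdiff_singleton, Set.insert_eq_of_mem hy] at hm

end ThreeConnectedOn

/-! ### Edge-maximal `K₄`-minor-free sets -/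

def IsEdgeMaximalK4FreeOn (G : SimpleGraph V) (S : Set V) : Prop :=
  ¬ G.HasK4MinorOn S ∧ ∀ u ∈ S, ∀ v ∈ S, u ≠ v → ¬ G.Adj u v → (G ⊔ edge u v).HasK4MinorOn S

namespace IsEdgeMaximalK4FreeOn

lemma not_hasK4MinorOn_sup_edge (hS : G.IsEdgeMaximalK4FreeOn S) (ht : t ⊆ S)
    (h : v ∉ t ∨ w ∉ t) : ¬ (G ⊔ edge v w).HasK4MinorOn t := fun hm =>
  hS.1 ((hm.of_sup_edge h).mono_set ht)

/-- If `S` fell apart, joining two components by an edge `ab` would create a `K₄` minor; it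
would survive on one side of the separation `{a, b}`, where `a` or `b` is a pendant vertex. -/
lemma connectedOn (hS : G.IsEdgeMaximalK4FreeOn S) (hne : S.Nonempty) : G.ConnectedOn S := by
  by_contra hnc
  obtain ⟨a, ha, b, hb, hbK⟩ := exists_notMem_componentIn hne hnc
  set K := G.componentIn S a
  have haK : a ∈ K := componentIn.mem_self ha
  have hab : a ≠ b := fun h => hbK (h ▸ haK)
  have hnadj : ¬ G.Adj a b := fun h => hbK (componentIn.mem_of_adj haK hb h)
  have hsep := (isTwoSeparation_of_closed (G := G) (s := S) (K := K) (v := a) (w := b)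
    fun p hp q hq hpq _ _ => componentIn.mem_of_adj hp hq hpq).sup_edge
    (Or.inl haK) (Or.inr (Or.inr rfl))
  rcases hsep.hasK4MinorOn (adj_sup_edge hab) (hS.2 a ha b hb hab hnadj) with hm | hm
  · refine hS.not_hasK4MinorOn_sup_edge (t := (K ∪ {a, b}) \ {b}) ?_ (Or.inr fun h => h.2 rfl)
      (hm.diff_singleton (a₁ := a) (a₂ := a) (isClique_pair.2 fun h => absurd rfl h)
        fun x hx hbx => ?_)
    · rintro x ⟨hx | rfl | rfl, hxb⟩
      exacts [hx.1, ha, absurd rfl hxb]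
    · rcases adj_sup_edge_iff.1 hbx with hbx' | ⟨⟨rfl, rfl⟩ | ⟨-, rfl⟩, -⟩
      · rcases hx with hx | rfl | rfl
        exacts [absurd (componentIn.mem_of_adj hx hb hbx'.symm) hbK, Or.inl rfl,
          absurd hbx' G.irrefl]
      · exact absurd rfl hab
      · exact Or.inl rfl
  · refine hS.not_hasK4MinorOn_sup_edge (t := ((S \ K) ∪ {a, b}) \ {a}) ?_ (Or.inl fun h => h.2 rfl)
      (hm.diff_singleton (a₁ := b) (a₂ := b) (isClique_pair.2 fun h => absurd rfl h)
        fun x hx hax => ?_)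
    · rintro x ⟨hx | rfl | rfl, hxa⟩
      exacts [hx.1, absurd rfl hxa, hb]
    · rcases adj_sup_edge_iff.1 hax with hax' | ⟨⟨-, rfl⟩ | ⟨rfl, -⟩, -⟩
      · rcases hx with hx | rfl | rfl
        exacts [absurd (componentIn.mem_of_adj haK hx.1 hax') hx.2, absurd hax' G.irrefl,
          absurd hax' hnadj]
      · exact Or.inl rfl
      · exact absurd rfl hab

/-- A cut vertex `v` is excluded by joining neighbours `k`, `l` of `v` in different components:
on the side of `l`, the vertex `k` has only the adjacent neighbours `v` and `l`. -/
lemma connectedOn_diff_singleton (hS : G.IsEdgeMaximalK4FreeOn S) (hconn : G.ConnectedOn S)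
    (hv : v ∈ S) (hne : (S \ {v}).Nonempty) : G.ConnectedOn (S \ {v}) := by
  by_contra hnc
  obtain ⟨x, hx, y, hy, hyK⟩ := exists_notMem_componentIn hne hnc
  set K := G.componentIn (S \ {v}) x
  obtain ⟨k, hkK, hvk⟩ := hconn.exists_adj_componentIn hv hx
  obtain ⟨l, hlL, hvl⟩ := hconn.exists_adj_componentIn hv hy
  have hlK : l ∉ K := Set.disjoint_right.1 (componentIn.disjoint hy hyK) hlL
  have hkl : k ≠ l := fun h => hlK (h ▸ hkK)
  have hnadj : ¬ G.Adj k l := fun h => hlK (componentIn.mem_of_adj hkK hlL.1 h)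
  have hle : G ≤ G ⊔ edge k l := le_sup_left
  have hsep := (isTwoSeparation_of_closed (G := G) (s := S) (K := K) (v := v) (w := k)
    fun p hp q hq hpq _ hqX => componentIn.mem_of_adj hp ⟨hq, fun h => hqX (Or.inl h)⟩ hpq).symm
    |>.sup_edge (Or.inr (Or.inr rfl)) (Or.inl ⟨hlL.1.1, hlK⟩)
  rcases hsep.hasK4MinorOn (hle hvk) (hS.2 k hkK.1.1 l hlL.1.1 hkl hnadj) with hm | hm
  · refine hS.not_hasK4MinorOn_sup_edge (t := ((S \ K) ∪ {v, k}) \ {k}) ?_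
      (Or.inl fun h => h.2 rfl)
      (hm.diff_singleton (a₁ := v) (a₂ := l) (isClique_pair.2 fun _ => hle hvl) fun z hz hkz => ?_)
    · rintro z ⟨hz | rfl | rfl, hzk⟩
      exacts [hz.1, hv, absurd rfl hzk]
    rcases adj_sup_edge_iff.1 hkz with hkz' | ⟨⟨-, rfl⟩ | ⟨rfl, -⟩, -⟩
    · rcases hz with hz | rfl | rfl
      · by_cases hzv : z = v
        · exact Or.inl hzv
        · exact absurd (componentIn.mem_of_adj hkK ⟨hz.1, hzv⟩ hkz') hz.2
      · exact Or.inl rfl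
      · exact absurd hkz' G.irrefl
    · exact Or.inr rfl
    · exact absurd rfl hkl
  · refine hS.not_hasK4MinorOn_sup_edge (t := K ∪ {v, k}) ?_ (Or.inr ?_) hm
    · rintro z (hz | rfl | rfl)
      exacts [hz.1.1, hv, hkK.1.1]
    · rintro (h | h | h)
      exacts [hlK h, hlL.1.2 h, hkl h.symm]

lemma connectedOn_diff_pair (hS : G.IsEdgeMaximalK4FreeOn S)
    (hcut : ∀ z ∈ S, G.ConnectedOn (S \ {z})) (hx : x ∈ S) (hy : y ∈ S) (hxy : x ≠ y)
    (hnadj : ¬ G.Adj x y) (hne : (S \ {x, y}).Nonempty) : G.ConnectedOn (S \ {x, y}) := by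
  by_contra hnc
  obtain ⟨a, ha, b, hb, hbK⟩ := exists_notMem_componentIn hne hnc
  set K := G.componentIn (S \ {x, y}) a
  have hattach : ∀ c ∈ S \ {x, y}, (∃ p ∈ G.componentIn (S \ {x, y}) c, G.Adj x p) ∧
      ∃ q ∈ G.componentIn (S \ {x, y}) c, G.Adj y q := by
    intro c hc
    have h₁ := (hcut y hy).exists_adj_componentIn (v := x) ⟨hx, hxy⟩ (a := c)
    have h₂ := (hcut x hx).exists_adj_componentIn (v := y) ⟨hy, hxy.symm⟩ (a := c)
    rw [Set.diff_singleton_diff_singleton_comm] at h₁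
    rw [Set.diff_singleton_diff_singleton] at h₂
    exact ⟨h₁ hc, h₂ hc⟩
  have hxyC : ∀ c, Disjoint (G.componentIn (S \ {x, y}) c) {x, y} :=
    fun c => Set.disjoint_left.2 fun _ hz => (componentIn.subset hz).2
  have hsep := (isTwoSeparation_of_closed (G := G) (s := S) (K := K) (v := x) (w := y)
    fun p hp q hq hpq _ hqX => componentIn.mem_of_adj hp ⟨hq, hqX⟩ hpq).sup_edge
    (Or.inr (Or.inl rfl)) (Or.inr (Or.inr rfl))
  have hxyS : ({x, y} : Set V) ⊆ S := by rintro z (rfl | rfl); exacts [hx, hy]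
  rcases hsep.hasK4MinorOn (adj_sup_edge hxy) (hS.2 x hx y hy hxy hnadj) with hm | hm
  · obtain ⟨⟨p, hp, hxp⟩, q, hq, hyq⟩ := hattach b hb
    refine hS.1 ((hm.of_sup_edge_of_connectedOn (componentIn.connectedOn hb)
      (Set.disjoint_union_right.2 ⟨(componentIn.disjoint hb hbK).symm, hxyC b⟩)
      ⟨p, hp, hxp⟩ ⟨q, hq, hyq⟩).mono_set ?_)
    exact Set.union_subset (Set.union_subset (fun z hz => hz.1.1) hxyS) fun z hz => hz.1.1
  · obtain ⟨⟨p, hp, hxp⟩, q, hq, hyq⟩ := hattach a ha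
    refine hS.1 ((hm.of_sup_edge_of_connectedOn (componentIn.connectedOn ha)
      (Set.disjoint_union_right.2 ⟨Set.disjoint_sdiff_right, hxyC a⟩)
      ⟨p, hp, hxp⟩ ⟨q, hq, hyq⟩).mono_set ?_)
    exact Set.union_subset (Set.union_subset Set.sdiff_subset hxyS) fun z hz => hz.1.1

theorem exists_adj_not_connectedOn [Finite V] (hS : G.IsEdgeMaximalK4FreeOn S)
    (h4 : 4 ≤ S.ncard) : ∃ v ∈ S, ∃ w ∈ S, G.Adj v w ∧ ¬ G.ConnectedOn (S \ {v, w}) := by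
  by_contra! hA
  have h3 : 3 ≤ S.ncard := by omega
  have hconn := hS.connectedOn (Set.nonempty_of_ncard_ne_zero (by omega))
  have hcut : ∀ z ∈ S, G.ConnectedOn (S \ {z}) := fun z hz => hS.connectedOn_diff_singleton hconn hz
    (by simpa using Set.nonempty_diff_pair_of_three_le_ncard h3 z z)
  refine hS.1 (ThreeConnectedOn.hasK4MinorOn (fun x hx y hy hxy => ?_) h4)
  by_cases hadj : G.Adj x y
  · exact hA x hx y hy hadj
  · exact hS.connectedOn_diff_pair hcut hx hy hxy hadj
      (Set.nonempty_diff_pair_of_three_le_ncard h3 x y)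

lemma of_isTwoSeparation (hS : G.IsEdgeMaximalK4FreeOn S) (hsep : G.IsTwoSeparation S S₁ S₂ v w)
    (hvw : G.Adj v w) (hS₁ : S₁ ⊆ S) (hS₂ : S₂ ⊆ S) : G.IsEdgeMaximalK4FreeOn S₁ := by
  refine ⟨fun hm => hS.1 (hm.mono_set hS₁), fun p hp q hq hpq hnadj => ?_⟩
  refine ((hsep.sup_edge hp hq).hasK4MinorOn (le_sup_left (b := edge p q) hvw)
    (hS.2 p (hS₁ hp) q (hS₁ hq) hpq hnadj)).resolve_right
    (hS.not_hasK4MinorOn_sup_edge hS₂ ?_)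
  by_contra! hpq₂
  have hp' := hsep.inter_subset ⟨hp, hpq₂.1⟩
  have hq' := hsep.inter_subset ⟨hq, hpq₂.2⟩
  refine hnadj ?_
  rcases hp' with rfl | rfl <;> rcases hq' with rfl | rfl
  exacts [absurd rfl hpq, hvw, hvw.symm, absurd rfl hpq]

theorem exists_isTwoSeparation [Finite V] (hS : G.IsEdgeMaximalK4FreeOn S) (h4 : 4 ≤ S.ncard) :
    ∃ S₁ S₂ v w, G.IsTwoSeparation S S₁ S₂ v w ∧ G.Adj v w ∧ S₁ ⊆ S ∧ S₂ ⊆ S ∧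
      3 ≤ S₁.ncard ∧ S₁.ncard < S.ncard ∧ 3 ≤ S₂.ncard ∧ S₂.ncard < S.ncard := by
  obtain ⟨v, hv, w, hw, hvw, hnc⟩ := hS.exists_adj_not_connectedOn h4
  obtain ⟨a, ha, b, hb, hbK⟩ :=
    exists_notMem_componentIn (Set.nonempty_diff_pair_of_three_le_ncard (by omega) v w) hnc
  set K := G.componentIn (S \ {v, w}) a
  have hsep : G.IsTwoSeparation S (K ∪ {v, w}) ((S \ K) ∪ {v, w}) v w :=
    isTwoSeparation_of_closed fun p hp q hq hpq _ hqX => componentIn.mem_of_adj hp ⟨hq, hqX⟩ hpq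
  have hvwS : ({v, w} : Set V) ⊆ S := by rintro z (rfl | rfl); exacts [hv, hw]
  have hS₁ : K ∪ {v, w} ⊆ S := Set.union_subset (fun z hz => hz.1.1) hvwS
  have hS₂ : (S \ K) ∪ {v, w} ⊆ S := Set.union_subset Set.sdiff_subset hvwS
  have haK : a ∈ K := componentIn.mem_self ha
  have hne : ∀ {c}, c ∈ S \ {v, w} → c ≠ v ∧ c ≠ w := fun hc =>
    ⟨fun h => hc.2 (Or.inl h), fun h => hc.2 (Or.inr h)⟩
  refine ⟨_, _, v, w, hsep, hvw, hS₁, hS₂, ?_, ?_, ?_, ?_⟩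
  · exact (Set.two_lt_ncard (Set.toFinite _)).2 ⟨a, Or.inl haK, v, Or.inr (Or.inl rfl), w,
      Or.inr (Or.inr rfl), (hne ha).1, (hne ha).2, hvw.ne⟩
  · refine Set.ncard_lt_ncard ⟨hS₁, fun h => ?_⟩
    rcases h hb.1 with hb' | hb'
    exacts [hbK hb', hb.2 hb']
  · exact (Set.two_lt_ncard (Set.toFinite _)).2 ⟨b, Or.inl ⟨hb.1, hbK⟩, v, Or.inr (Or.inl rfl), w,
      Or.inr (Or.inr rfl), (hne hb).1, (hne hb).2, hvw.ne⟩
  · refine Set.ncard_lt_ncard ⟨hS₂, fun h => ?_⟩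
    rcases h ha.1 with ha' | ha'
    exacts [ha'.2 haK, ha.2 ha']

lemma isClique_of_ncard_le_three [Finite V] (hS : G.IsEdgeMaximalK4FreeOn S)
    (h3 : S.ncard ≤ 3) : G.IsClique S := fun p hp q hq hpq => by
  by_contra hnadj
  have := (hS.2 p hp q hq hpq hnadj).four_le_ncard
  omega

theorem exists_adj_adj [Finite V] (hS : G.IsEdgeMaximalK4FreeOn S) (h3 : 3 ≤ S.ncard)
    (hx : x ∈ S) (hy : y ∈ S) (hxy : G.Adj x y) : ∃ z ∈ S, G.Adj x z ∧ G.Adj y z := by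
  obtain ⟨n, hn⟩ : ∃ n, S.ncard = n := ⟨_, rfl⟩
  induction n using Nat.strong_induction_on generalizing S with
  | _ n ih =>
  by_cases h4 : 4 ≤ S.ncard
  · obtain ⟨S₁, S₂, v, w, hsep, hvw, hS₁, hS₂, h₁, h₁S, h₂, h₂S⟩ := hS.exists_isTwoSeparation h4
    rcases hsep.adj_mem hx hy hxy with ⟨hx₁, hy₁⟩ | ⟨hx₂, hy₂⟩
    · obtain ⟨z, hz, hxz⟩ :=
        ih _ (hn ▸ h₁S) (hS.of_isTwoSeparation hsep hvw hS₁ hS₂) h₁ hx₁ hy₁ rfl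
      exact ⟨z, hS₁ hz, hxz⟩
    · obtain ⟨z, hz, hxz⟩ :=
        ih _ (hn ▸ h₂S) (hS.of_isTwoSeparation hsep.symm hvw hS₂ hS₁) h₂ hx₂ hy₂ rfl
      exact ⟨z, hS₂ hz, hxz⟩
  · obtain ⟨z, hz, hzxy⟩ := Set.nonempty_diff_pair_of_three_le_ncard h3 x y
    have hclique := hS.isClique_of_ncard_le_three (by omega)
    exact ⟨z, hz, hclique hx hz fun h => hzxy (Or.inl h.symm),
      hclique hy hz fun h => hzxy (Or.inr h.symm)⟩

end IsEdgeMaximalK4FreeOn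

/-! ### Colourings -/

lemma IsTwoSeparation.exists_properOn {α : Type*}
    (hsep : G.IsTwoSeparation S S₁ S₂ v w) (hvw : G.Adj v w) {c₁ c₂ : V → α}
    (hc₁ : ∀ x ∈ S₁, ∀ y ∈ S₁, G.Adj x y → c₁ x ≠ c₁ y)
    (hc₂ : ∀ x ∈ S₂, ∀ y ∈ S₂, G.Adj x y → c₂ x ≠ c₂ y) :
    ∃ c : V → α, ∀ x ∈ S, ∀ y ∈ S, G.Adj x y → c x ≠ c y := by
  classical
  obtain ⟨σ, hσv, hσw⟩ := Equiv.Perm.exists_apply_eq_and_apply_eq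
    (hc₂ v hsep.mem_right.1 w hsep.mem_right.2 hvw) (hc₁ v hsep.mem_left.1 w hsep.mem_left.2 hvw)
  set c := fun x => if x ∈ S₁ then c₁ x else σ (c₂ x)
  have hcS₁ : ∀ x ∈ S₁, c x = c₁ x := fun x hx => if_pos hx
  have hcS₂ : ∀ x ∈ S₂, c x = σ (c₂ x) := fun x hx => by
    by_cases hx₁ : x ∈ S₁
    · rw [hcS₁ x hx₁]
      rcases hsep.inter_subset ⟨hx₁, hx⟩ with rfl | rfl
      exacts [hσv.symm, hσw.symm]
    · exact if_neg hx₁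
  refine ⟨c, fun x hx y hy hxy => ?_⟩
  rcases hsep.adj_mem hx hy hxy with ⟨hx₁, hy₁⟩ | ⟨hx₂, hy₂⟩
  · rw [hcS₁ x hx₁, hcS₁ y hy₁]; exact hc₁ x hx₁ y hy₁ hxy
  · rw [hcS₂ x hx₂, hcS₂ y hy₂]; exact σ.injective.ne (hc₂ x hx₂ y hy₂ hxy)

theorem IsEdgeMaximalK4FreeOn.exists_properOn [Finite V] (hS : G.IsEdgeMaximalK4FreeOn S) :
    ∃ c : V → Fin 3, ∀ x ∈ S, ∀ y ∈ S, G.Adj x y → c x ≠ c y := by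
  obtain ⟨n, hn⟩ : ∃ n, S.ncard = n := ⟨_, rfl⟩
  induction n using Nat.strong_induction_on generalizing S with
  | _ n ih =>
  by_cases h4 : 4 ≤ S.ncard
  · obtain ⟨S₁, S₂, v, w, hsep, hvw, hS₁, hS₂, -, h₁S, -, h₂S⟩ := hS.exists_isTwoSeparation h4
    obtain ⟨c₁, hc₁⟩ := ih _ (hn ▸ h₁S) (hS.of_isTwoSeparation hsep hvw hS₁ hS₂) rfl
    obtain ⟨c₂, hc₂⟩ := ih _ (hn ▸ h₂S) (hS.of_isTwoSeparation hsep.symm hvw hS₂ hS₁) rfl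
    exact hsep.exists_properOn hvw hc₁ hc₂
  · classical
    have : Fintype V := Fintype.ofFinite V
    obtain ⟨e⟩ : Nonempty (S ↪ Fin 3) := Function.Embedding.nonempty_of_card_le <| by
      rw [Fintype.card_fin, ← Nat.card_eq_fintype_card, Nat.card_coe_set_eq]; omega
    obtain ⟨c, hc⟩ := Set.exists_injOn_iff_injective.2 ⟨e, e.injective⟩
    exact ⟨c, fun x hx y hy hxy => hc.ne hx hy hxy.ne⟩

/-- Every maximal clique contains a triangle, which is rainbow and so has exactly one vertex of
colour `0`. -/
lemma isCliqueColoring_of_forall_exists_adj_adj {c : V → Fin 3}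
    (hc : ∀ x y, G.Adj x y → c x ≠ c y) (htri : ∀ x y, G.Adj x y → ∃ z, G.Adj x z ∧ G.Adj y z) :
    G.IsCliqueColoring fun u => if c u = 0 then (0 : Fin 2) else 1 := by
  intro s hs ⟨x, hx, y, hy, hxy⟩
  have hxy' := hs.1 hx hy hxy
  obtain ⟨z, hz, hzxy⟩ : ∃ z ∈ s, z ≠ x ∧ z ≠ y := by
    by_contra! hsub
    obtain ⟨z, hxz, hyz⟩ := htri x y hxy'
    have hclique : G.IsClique (insert z s) := hs.1.insert fun u hu _ => by
      rcases eq_or_ne u x with rfl | hux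
      · exact hxz.symm
      · rw [hsub u hu hux]; exact hyz.symm
    have hzs : z ∈ s := by rw [hs.2 _ hclique (Set.subset_insert z s)]; exact Set.mem_insert z s
    exact hyz.ne (hsub z hzs hxz.ne.symm).symm
  have hcol : ∀ a b c : Fin 3, a ≠ b → a ≠ c → b ≠ c →
      (a = 0 ↔ b = 0) → (a = 0 ↔ c = 0) → False := by decide
  by_contra! hmono
  have hiff : ∀ u ∈ s, (c x = 0 ↔ c u = 0) := fun u hu => by
    have := hmono x hx u hu
    by_cases hcx : c x = 0 <;> by_cases hcu : c u = 0 <;> simp [hcx, hcu] at this ⊢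
  exact hcol (c x) (c y) (c z) (hc x y hxy') (hc x z (hs.1 hx hz hzxy.1.symm))
    (hc y z (hs.1 hy hz hzxy.2.symm)) (hiff y hy) (hiff z hz)

lemma EdgeMaximalMinorFree.isEdgeMaximalK4FreeOn_univ
    (h : G.EdgeMaximalMinorFree (⊤ : SimpleGraph (Fin 4))) :
    G.IsEdgeMaximalK4FreeOn Set.univ :=
  ⟨fun hm => h.1 (hasK4MinorOn_univ_iff.1 hm),
    fun u _ v _ huv hnadj => hasK4MinorOn_univ_iff.2 (h.2 u v huv hnadj)⟩

end SimpleGraph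

/-- Every edge-maximal `K₄`-minor-free graph is 2-clique-colorable. -/
theorem edge_maximal_K4_minor_free_two_clique_colorable {V : Type*} [Fintype V]
    (G : SimpleGraph V) (h : G.EdgeMaximalMinorFree (⊤ : SimpleGraph (Fin 4))) :
    G.CliqueColorable 2 := by
  have hS := h.isEdgeMaximalK4FreeOn_univ
  by_cases hV : Fintype.card V ≤ 2
  · obtain ⟨e⟩ : Nonempty (V ↪ Fin 2) := Function.Embedding.nonempty_of_card_le (by simpa using hV)
    exact ⟨e, fun s _ ⟨x, hx, y, hy, hxy⟩ => ⟨x, hx, y, hy, e.injective.ne hxy⟩⟩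
  have h3 : 3 ≤ (Set.univ : Set V).ncard := by
    rw [Set.ncard_univ, Nat.card_eq_fintype_card]; omega
  obtain ⟨c, hc⟩ := hS.exists_properOn
  refine ⟨_, isCliqueColoring_of_forall_exists_adj_adj (fun x y => hc x trivial y trivial)
    fun x y hxy => ?_⟩
  obtain ⟨z, -, hz⟩ := hS.exists_adj_adj h3 trivial trivial hxy
  exact ⟨z, hz⟩
end

section
/- If G is a claw-free graph containing no clique on 4 vertices, then the maximum degree of G is at most 5, and for every vertex v of degree 5 the subgraph of G induced by the closed neighborhood N[v] is isomorphic to the 5-wheel W_5 (the graph obtained from the cycle C_5 by adding a new vertex adjacent to all five cycle vertices). -/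
open SimpleGraph

/-- The `n`-wheel: a cycle `Cₙ` together with a hub (`none`) adjacent to every
cycle vertex. -/
def wheelGraph (n : ℕ) : SimpleGraph (Option (Fin n)) :=
  SimpleGraph.fromRel fun a b =>
    a = none ∨ b = none ∨ ∃ i j, a = some i ∧ b = some j ∧ (SimpleGraph.cycleGraph n).Adj i j

/-!
The neighbourhood `N(v)` of a vertex spans a graph with no triangle (a triangle plus `v` is a
4-clique) and no independent triple (three pairwise nonadjacent neighbours and `v` form a claw).
In such a graph the neighbours of any vertex `u` are pairwise nonadjacent and its non-neighbours
pairwise adjacent, so `u` has at most two of each and there are at most `5` vertices; with exactly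
`5` vertices every vertex has degree `2`, the graph is a `5`-cycle, and `N[v]` is the `5`-wheel.
-/

theorem Fin.sub_one_ne_add_one {n : ℕ} (i : Fin (n + 3)) : i - 1 ≠ i + 1 := by
  intro h
  have h2 : (1 + 1 : Fin (n + 3)) = 0 :=
    left_eq_add.1 (h.trans (by rw [← add_assoc, sub_add_cancel]))
  rw [Fin.ext_iff, Fin.val_add, Fin.val_one, Fin.val_zero, Nat.mod_eq_of_lt (by omega)] at h2
  omega

@[simp]
theorem wheelGraph_adj_none_some {n : ℕ} (i : Fin n) : (wheelGraph n).Adj none (some i) := by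
  simp [wheelGraph]

@[simp]
theorem wheelGraph_adj_some_none {n : ℕ} (i : Fin n) : (wheelGraph n).Adj (some i) none := by
  simp [wheelGraph]

@[simp]
theorem wheelGraph_adj_some_some {n : ℕ} (i j : Fin n) :
    (wheelGraph n).Adj (some i) (some j) ↔ (cycleGraph n).Adj i j := by
  simp only [wheelGraph, fromRel_adj, ne_eq, Option.some.injEq, reduceCtorEq, false_or,
    exists_and_left, exists_eq_left']
  exact ⟨fun h => h.2.elim id .symm, fun h => ⟨h.ne, .inl h⟩⟩

namespace SimpleGraph

section Neighborhood

variable {V : Type*} {G : SimpleGraph V}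

theorem ClawFree.not_isNIndepSet_three (hG : G.ClawFree) {v : V} {t : Finset V}
    (ht : ↑t ⊆ G.neighborSet v) : ¬G.IsNIndepSet 3 t := by
  intro h
  let e : Fin 3 ≃ t := (t.equivFinOfCardEq h.card_eq).symm
  have hv : v ∉ t := fun hvt => G.loopless.irrefl v (ht hvt)
  let f : Fin 1 ⊕ Fin 3 ↪ V :=
    ⟨Sum.elim (fun _ => v) (fun i => (e i : V)),
      Function.Injective.sumElim (fun _ _ _ => Subsingleton.elim _ _)
        (Subtype.val_injective.comp e.injective) (fun _ i hi => hv (hi ▸ (e i).2))⟩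
  refine hG.false ⟨f, ?_⟩
  rintro (i | i) (j | j) <;> simp only [f, Function.Embedding.coeFn_mk, Sum.elim_inl,
    Sum.elim_inr, completeBipartiteGraph_adj, Sum.isLeft_inl, Sum.isLeft_inr, Sum.isRight_inl,
    Sum.isRight_inr, Bool.false_eq_true, and_false, or_false, false_or, and_true, iff_false,
    iff_true]
  · exact G.loopless.irrefl v
  · exact ht (e j).2
  · exact (ht (e i).2).symm
  · exact fun hadj => h.isIndepSet (e i).2 (e j).2 hadj.ne hadj

theorem ClawFree.indepSetFree_induce_neighborSet (hG : G.ClawFree) (v : V) :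
    (G.induce (G.neighborSet v)).IndepSetFree 3 := by
  intro t ht
  refine hG.not_isNIndepSet_three (v := v) (t := t.map (Function.Embedding.subtype _)) ?_
    ⟨?_, by simpa using ht.card_eq⟩
  · intro x hx
    simp only [Finset.coe_map, Function.Embedding.coe_subtype, Set.mem_image] at hx
    obtain ⟨y, -, rfl⟩ := hx
    exact y.2
  · simp only [Finset.coe_map, Function.Embedding.coe_subtype]
    rintro _ ⟨x, hx, rfl⟩ _ ⟨y, hy, rfl⟩ hxy
    exact ht.isIndepSet hx hy fun h => hxy (congrArg Subtype.val h)

theorem CliqueFree.induce_neighborSet {n : ℕ} (h : G.CliqueFree (n + 1)) (v : V) :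
    (G.induce (G.neighborSet v)).CliqueFree n := by
  rw [cliqueFree_induce_iff]
  simpa using CliqueFreeOn.of_succ G (h.cliqueFreeOn (s := Set.univ)) (Set.mem_univ v)

theorem nonempty_induce_insert_neighborSet_iso_wheelGraph {v : V} {n : ℕ}
    (φ : G.induce (G.neighborSet v) ≃g cycleGraph n) :
    Nonempty (G.induce (insert v (G.neighborSet v)) ≃g wheelGraph n) := by
  let g : Option (Fin n) → ↥(insert v (G.neighborSet v))
    | none => ⟨v, Set.mem_insert _ _⟩
    | some i => ⟨φ.symm i, Set.mem_insert_of_mem _ (φ.symm i).2⟩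
  have hv : ∀ i, (φ.symm i : V) ≠ v :=
    fun i h => G.notMem_neighborSet_self (h ▸ (φ.symm i).2)
  have hg : Function.Bijective g := by
    refine ⟨?_, ?_⟩
    · rintro (_ | i) (_ | j) h <;> simp only [g, Subtype.mk.injEq] at h
      · rfl
      · exact absurd h.symm (hv j)
      · exact absurd h (hv i)
      · exact congrArg some (φ.symm.injective (Subtype.ext h))
    · rintro ⟨x, rfl | hx⟩
      · exact ⟨none, rfl⟩
      · exact ⟨some (φ ⟨x, hx⟩), by simp [g]⟩
  refine ⟨(RelIso.mk (Equiv.ofBijective g hg) ?_).symm⟩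
  rintro (_ | i) (_ | j) <;>
    simp only [Equiv.ofBijective_apply, g, comap_adj, Function.Embedding.coe_subtype]
  · simp
  · exact iff_of_true (φ.symm j).2 (wheelGraph_adj_none_some j)
  · exact iff_of_true ((φ.symm i).2 : G.Adj v _).symm (wheelGraph_adj_some_none i)
  · simpa using φ.symm.map_adj_iff (v := i) (w := j)

end Neighborhood

section TriangleFreeIndepSetFree

variable {W : Type*} {H : SimpleGraph W}

theorem CliqueFree.not_adj_of_adj_of_adj (h3 : H.CliqueFree 3) {a b c : W} (hab : H.Adj a b)
    (hac : H.Adj a c) : ¬H.Adj b c :=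
  fun hbc => by classical exact h3 _ (is3Clique_triple_iff.2 ⟨hab, hac, hbc⟩)

theorem IndepSetFree.adj_of_not_adj_of_not_adj (hi : H.IndepSetFree 3) {a b c : W} (hab : a ≠ b)
    (hac : a ≠ c) (hbc : b ≠ c) (nab : ¬H.Adj a b) (nac : ¬H.Adj a c) : H.Adj b c := by
  by_contra nbc
  exact ((cliqueFree_compl H).2 hi).not_adj_of_adj_of_adj
    ⟨hab, nab⟩ ⟨hac, nac⟩ ⟨hbc, nbc⟩

variable [Fintype W]

theorem degree_le_two_of_cliqueFree_of_indepSetFree [DecidableRel H.Adj] (h3 : H.CliqueFree 3)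
    (hi : H.IndepSetFree 3) (v : W) : H.degree v ≤ 2 := by
  by_contra! h
  obtain ⟨t, hts, ht⟩ := Finset.exists_subset_card_eq (s := H.neighborFinset v) h
  refine hi t ⟨(isIndepSet_neighborSet_of_triangleFree H h3 v).mono ?_, ht⟩
  rw [← coe_neighborFinset]
  exact_mod_cast hts

theorem card_le_degree_add_three_of_cliqueFree_of_indepSetFree [DecidableRel H.Adj]
    (h3 : H.CliqueFree 3) (hi : H.IndepSetFree 3) (v : W) : Fintype.card W ≤ H.degree v + 3 := by
  classical
  have hdegc := degree_le_two_of_cliqueFree_of_indepSetFree (H := Hᶜ)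
    ((cliqueFree_compl H).2 hi) ((indepSetFree_compl H).2 h3) v
  rw [degree_compl] at hdegc
  omega

theorem card_le_five_of_cliqueFree_of_indepSetFree (h3 : H.CliqueFree 3)
    (hi : H.IndepSetFree 3) : Fintype.card W ≤ 5 := by
  classical
  cases isEmpty_or_nonempty W with
  | inl _ => simp
  | inr hW =>
    obtain ⟨v⟩ := hW
    have := card_le_degree_add_three_of_cliqueFree_of_indepSetFree h3 hi v
    have := degree_le_two_of_cliqueFree_of_indepSetFree h3 hi v
    omega

variable [DecidableRel H.Adj]

theorem isRegularOfDegree_two_of_card_eq_five (h3 : H.CliqueFree 3) (hi : H.IndepSetFree 3)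
    (hW : Fintype.card W = 5) : H.IsRegularOfDegree 2 := fun v => by
  have := card_le_degree_add_three_of_cliqueFree_of_indepSetFree h3 hi v
  have := degree_le_two_of_cliqueFree_of_indepSetFree h3 hi v
  omega

theorem IsRegularOfDegree.exists_adj_iff_eq_or_eq (hH : H.IsRegularOfDegree 2) (v : W) :
    ∃ a b, a ≠ b ∧ ∀ x, H.Adj v x ↔ x = a ∨ x = b := by
  classical
  obtain ⟨a, b, hab, hN⟩ := Finset.card_eq_two.1 (hH v)
  refine ⟨a, b, hab, fun x => ?_⟩
  rw [← mem_neighborFinset, hN, Finset.mem_insert, Finset.mem_singleton]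

theorem IsRegularOfDegree.exists_adj_iff_eq_or_eq_of_adj (hH : H.IsRegularOfDegree 2) {v u : W}
    (h : H.Adj v u) : ∃ w, w ≠ u ∧ ∀ x, H.Adj v x ↔ x = u ∨ x = w := by
  obtain ⟨a, b, hab, hadj⟩ := hH.exists_adj_iff_eq_or_eq v
  rcases (hadj u).1 h with rfl | rfl
  · exact ⟨b, hab.symm, hadj⟩
  · exact ⟨a, hab, fun x => (hadj x).trans or_comm⟩

theorem IsRegularOfDegree.adj_iff_cycleGraph_adj {n : ℕ} (hH : H.IsRegularOfDegree 2)
    (f : Fin (n + 3) ≃ W) (hf : ∀ i, H.Adj (f i) (f (i + 1))) (i j : Fin (n + 3)) :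
    H.Adj (f i) (f j) ↔ (cycleGraph (n + 3)).Adj i j := by
  obtain ⟨w, -, hadj⟩ := hH.exists_adj_iff_eq_or_eq_of_adj (hf i)
  have hprev : H.Adj (f i) (f (i - 1)) := by simpa using (hf (i - 1)).symm
  have hw : w = f (i - 1) :=
    ((hadj _).1 hprev).resolve_left (f.injective.ne (Fin.sub_one_ne_add_one i)) |>.symm
  rw [hadj, hw, f.injective.eq_iff, f.injective.eq_iff, ← mem_neighborSet,
    cycleGraph_neighborSet]
  simp [or_comm]

def IsRegularOfDegree.isoCycleGraph {n : ℕ} (hH : H.IsRegularOfDegree 2) (f : Fin (n + 3) ≃ W)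
    (hf : ∀ i, H.Adj (f i) (f (i + 1))) : cycleGraph (n + 3) ≃g H where
  toEquiv := f
  map_rel_iff' := hH.adj_iff_cycleGraph_adj f hf _ _

theorem exists_equiv_fin_five_adj_add_one (h3 : H.CliqueFree 3) (hi : H.IndepSetFree 3)
    (hW : Fintype.card W = 5) : ∃ f : Fin 5 ≃ W, ∀ i, H.Adj (f i) (f (i + 1)) := by
  classical
  have hH := isRegularOfDegree_two_of_card_eq_five h3 hi hW
  obtain ⟨a₀⟩ : Nonempty W := Fintype.card_pos_iff.1 (by omega)
  obtain ⟨a₁, a₄, h14, N0⟩ := hH.exists_adj_iff_eq_or_eq a₀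
  have h01 : H.Adj a₀ a₁ := (N0 a₁).2 (.inl rfl)
  have h04 : H.Adj a₀ a₄ := (N0 a₄).2 (.inr rfl)
  obtain ⟨a₂, h20, N1⟩ := hH.exists_adj_iff_eq_or_eq_of_adj h01.symm
  obtain ⟨a₃, h30, N4⟩ := hH.exists_adj_iff_eq_or_eq_of_adj h04.symm
  have h12 : H.Adj a₁ a₂ := (N1 a₂).2 (.inr rfl)
  have h43 : H.Adj a₄ a₃ := (N4 a₃).2 (.inr rfl)
  have n14 : ¬H.Adj a₁ a₄ := h3.not_adj_of_adj_of_adj h01 h04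
  have n02 : ¬H.Adj a₀ a₂ := h3.not_adj_of_adj_of_adj h01.symm h12
  have n03 : ¬H.Adj a₀ a₃ := h3.not_adj_of_adj_of_adj h04.symm h43
  have h13 : a₁ ≠ a₃ := by rintro rfl; exact n14 h43.symm
  have h24 : a₂ ≠ a₄ := by rintro rfl; exact n14 h12
  have h23 : a₂ ≠ a₃ := by
    rintro rfl
    -- a fifth vertex would be adjacent to neither of the nonadjacent `a₁`, `a₄`
    obtain ⟨y, -, hy⟩ :=
      Finset.exists_mem_notMem_of_card_lt_card (s := {a₀, a₁, a₂, a₄}) (t := Finset.univ)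
      (by rw [Finset.card_univ, hW]; exact Finset.card_le_four.trans_lt (by norm_num))
    simp only [Finset.mem_insert, Finset.mem_singleton, not_or] at hy
    refine n14 (hi.adj_of_not_adj_of_not_adj hy.2.1 hy.2.2.2 h14 (fun h => ?_) (fun h => ?_))
    · rcases (N1 y).1 h.symm with h | h <;> simp_all
    · rcases (N4 y).1 h.symm with h | h <;> simp_all
  have h23' : H.Adj a₂ a₃ := hi.adj_of_not_adj_of_not_adj h20.symm h30.symm h23 n02 n03
  have hinj : Function.Injective ![a₀, a₁, a₂, a₃, a₄] := by
    intro i j hij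
    fin_cases i <;> fin_cases j <;> simp_all [eq_comm, h01.ne, h04.ne, h12.ne, h43.ne]
  have hbij : Function.Bijective ![a₀, a₁, a₂, a₃, a₄] :=
    (Fintype.bijective_iff_injective_and_card _).2 ⟨hinj, by simp [hW]⟩
  refine ⟨.ofBijective _ hbij, fun i => ?_⟩
  fin_cases i
  exacts [h01, h12, h23', h43.symm, h04.symm]

end TriangleFreeIndepSetFree

theorem nonempty_iso_cycleGraph_five {W : Type*} [Fintype W] {H : SimpleGraph W}
    (h3 : H.CliqueFree 3) (hi : H.IndepSetFree 3) (hW : Fintype.card W = 5) :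
    Nonempty (H ≃g cycleGraph 5) := by
  classical
  obtain ⟨f, hf⟩ := exists_equiv_fin_five_adj_add_one h3 hi hW
  exact ⟨((isRegularOfDegree_two_of_card_eq_five h3 hi hW).isoCycleGraph f hf).symm⟩

end SimpleGraph

theorem claw_free_no_K4_max_degree_five_general {V : Type*} [Fintype V]
    (G : SimpleGraph V) [DecidableRel G.Adj]
    (hclaw : G.ClawFree) (h4 : G.CliqueFree 4) :
    (∀ v : V, G.degree v ≤ 5) ∧
      ∀ v : V, G.degree v = 5 →
        Nonempty (G.induce (insert v (G.neighborSet v)) ≃g wheelGraph 5) := by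
  have h3 (v : V) := h4.induce_neighborSet v
  have hi (v : V) := hclaw.indepSetFree_induce_neighborSet v
  refine ⟨fun v => ?_, fun v hv => ?_⟩
  · rw [← card_neighborSet_eq_degree]
    exact card_le_five_of_cliqueFree_of_indepSetFree (h3 v) (hi v)
  · rw [← card_neighborSet_eq_degree] at hv
    obtain ⟨φ⟩ := nonempty_iso_cycleGraph_five (h3 v) (hi v) hv
    exact nonempty_induce_insert_neighborSet_iso_wheelGraph φ

/-- A claw-free graph with no 4-clique has maximum degree at most 5, and the
closed neighborhood of every vertex of degree 5 induces a 5-wheel. -/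
theorem claw_free_no_K4_max_degree_five {V : Type*} [Fintype V] [DecidableEq V]
    (G : SimpleGraph V) [DecidableRel G.Adj]
    (hclaw : G.ClawFree) (h4 : G.CliqueFree 4) :
    (∀ v : V, G.degree v ≤ 5) ∧
      ∀ v : V, G.degree v = 5 →
        Nonempty (G.induce (insert v (G.neighborSet v)) ≃g wheelGraph 5) :=
  claw_free_no_K4_max_degree_five_general G hclaw h4
end

section
/- Let G be a claw-free, K_5-minor-free graph, and let v be a vertex of G such that v lies in a maximal clique K of G and in a maximal clique L of G whose vertex sets intersect exactly in {v}, where K is a clique on 4 vertices. Then for every 2-clique-coloring φ' of G − v in which the vertices of K − v are all one color and the vertices of L − v are all the other color, there is no obstruction via any path from v avoiding K: concretely, every vertex q₁ outside K that together with K − v forms a clique and is colored differently from K − v lies in a different connected component of G − V(K − v) than v does. -/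
open SimpleGraph

/-!
A path from `q₁` to `v` avoiding `K - v`, with `v` removed, is a connected set `S` disjoint
from `K` that is adjacent to every vertex of `K`: to `v` through the last edge of the path,
and to `K - v` through `q₁`. Contracting `S` to a single vertex extends the 4-clique `K` to
a `K_5` minor.
-/

namespace SimpleGraph

variable {V : Type*} {G : SimpleGraph V}

theorem hasMinor_top_succ_of_isClique {C S : Set V} {n : ℕ} (hC : G.IsClique C)
    (hCfin : C.Finite) (hCn : C.ncard = n) (hS : (G.induce S).Connected) (hCS : Disjoint C S)
    (hadj : ∀ c ∈ C, ∃ s ∈ S, G.Adj c s) :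
    G.HasMinor (⊤ : SimpleGraph (Fin (n + 1))) := by
  have := hCfin.to_subtype
  let e : Fin n ≃ C := (Finite.equivFinOfCardEq (by rwa [Nat.card_coe_set_eq])).symm
  have hSne : S.Nonempty := Set.nonempty_coe_sort.mp hS.nonempty
  refine ⟨Fin.cons S fun i => {(e i : V)}, ?_, ?_, ?_, ?_⟩
  · intro w
    cases w using Fin.cases <;> simp [hSne]
  · intro w
    cases w using Fin.cases
    · exact hS
    · rw [Fin.cons_succ]
      exact Connected.of_subsingleton
  · intro w₁ w₂ hne
    cases w₁ using Fin.cases <;> cases w₂ using Fin.cases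
    · exact absurd rfl hne
    · simpa using hCS.notMem_of_mem_left (e _).2
    · simpa using hCS.notMem_of_mem_left (e _).2
    · simpa [Subtype.val_inj, e.injective.eq_iff] using hne
  · intro w₁ w₂ hw
    cases w₁ using Fin.cases <;> cases w₂ using Fin.cases
    · exact absurd rfl hw.ne
    · obtain ⟨s, hs, hcs⟩ := hadj _ (e _).2
      exact ⟨s, hs, _, rfl, hcs.symm⟩
    · obtain ⟨s, hs, hcs⟩ := hadj _ (e _).2
      exact ⟨_, rfl, s, hs, hcs⟩
    · refine ⟨_, rfl, _, rfl, hC (e _).2 (e _).2 ?_⟩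
      simpa [Subtype.val_inj, e.injective.eq_iff] using hw.ne

/-- `S` is a path from `u` to `v` inside `s`, with `v` itself removed. -/
theorem Reachable.exists_connected_adj_of_induce {s : Set V} {u v : s}
    (h : (G.induce s).Reachable u v) (huv : u ≠ v) :
    ∃ S ⊆ s, (G.induce S).Connected ∧ (u : V) ∈ S ∧ (v : V) ∉ S ∧ ∃ x ∈ S, G.Adj x v := by
  classical
  obtain ⟨w⟩ := h
  let p := (w.map (Embedding.induce s).toHom).toPath
  have hnil : ¬ p.val.Nil := Walk.not_nil_of_ne (Subtype.coe_ne_coe.mpr huv)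
  have hsupp : p.val.dropLast.support ++ [(v : V)] = p.val.support :=
    Walk.support_dropLast_concat hnil
  refine ⟨{x | x ∈ p.val.dropLast.support}, ?_, p.val.dropLast.connected_induce_support,
    p.val.dropLast.start_mem_support, ?_, _, p.val.dropLast.end_mem_support,
    Walk.adj_penultimate hnil⟩
  · intro x hx
    have hx : x ∈ p.val.support := hsupp ▸ List.mem_append_left _ hx
    have hxw := Walk.support_toPath_subset_support _ hx
    simp only [Walk.support_map, List.mem_map] at hxw
    obtain ⟨y, -, rfl⟩ := hxw
    exact y.2
  · have hnodup := p.property.support_nodup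
    rw [← hsupp, List.nodup_append] at hnodup
    exact fun hv => hnodup.2.2 _ hv _ (List.mem_singleton_self _) rfl

end SimpleGraph

theorem no_path_from_q1_to_v_general {V : Type*}
    (G : SimpleGraph V)
    (hK5 : ¬ G.HasMinor (⊤ : SimpleGraph (Fin 5)))
    (v : V) (K : Set V)
    (hK : G.IsMaxClique K)
    (hK4 : K.ncard = 4)
    (q₁ : {u : V // u ≠ v}) (hq₁K : (q₁ : V) ∉ K)
    (hq₁clique : G.IsClique ((K \ {v}) ∪ {(q₁ : V)})) :
    ¬ (G.induce (K \ {v})ᶜ).Reachable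
        ⟨(q₁ : V), fun h => hq₁K h.1⟩ ⟨v, fun h => h.2 rfl⟩ := by
  intro hreach
  obtain ⟨S, hSK, hS, hq₁S, hvS, x, hxS, hxv⟩ :=
    hreach.exists_connected_adj_of_induce fun h => q₁.2 (congrArg Subtype.val h)
  have hKS : Disjoint K S := Set.disjoint_left.mpr fun c hcK hcS =>
    hSK hcS ⟨hcK, fun hcv => hvS (hcv ▸ hcS)⟩
  have hadj : ∀ c ∈ K, ∃ s ∈ S, G.Adj c s := by
    intro c hc
    by_cases hcv : c = v
    · exact ⟨x, hxS, hcv ▸ hxv.symm⟩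
    · exact ⟨q₁, hq₁S, hq₁clique (.inl ⟨hc, hcv⟩) (.inr rfl) fun h => hq₁K (h ▸ hc)⟩
  exact hK5 (hasMinor_top_succ_of_isClique hK.1 (Set.finite_of_ncard_ne_zero (by omega)) hK4
    hS hKS hadj)

/-- Setting of Lemma 3.7 of the paper: `K` and `L` are maximal cliques meeting
exactly in `v`, with `K` a 4-clique, and `φ'` is a 2-clique-coloring of `G - v`
coloring `K - v` with one color and `L - v` with the other. Then every vertex
`q₁ ∉ K` forming a clique with `K - v` and colored differently from `K - v`
lies in a different component of `G - V(K - v)` than `v`. -/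
theorem no_path_from_q1_to_v {V : Type*} [Fintype V]
    (G : SimpleGraph V)
    (hclaw : G.ClawFree) (hK5 : ¬ G.HasMinor (⊤ : SimpleGraph (Fin 5)))
    (v : V) (K L : Set V)
    (hK : G.IsMaxClique K) (hL : G.IsMaxClique L)
    (hvK : v ∈ K) (hvL : v ∈ L) (hKL : K ∩ L = {v})
    (hK4 : K.ncard = 4)
    (φ' : {u : V // u ≠ v} → Fin 2)
    (hφ' : (G.induce {u : V | u ≠ v}).IsCliqueColoring φ')
    (cK cL : Fin 2) (hcKL : cK ≠ cL)
    (hcolK : ∀ u : {u : V // u ≠ v}, (u : V) ∈ K → φ' u = cK)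
    (hcolL : ∀ u : {u : V // u ≠ v}, (u : V) ∈ L → φ' u = cL)
    (q₁ : {u : V // u ≠ v}) (hq₁K : (q₁ : V) ∉ K)
    (hq₁clique : G.IsClique ((K \ {v}) ∪ {(q₁ : V)}))
    (hq₁col : φ' q₁ ≠ cK) :
    ¬ (G.induce (K \ {v})ᶜ).Reachable
        ⟨(q₁ : V), fun h => hq₁K h.1⟩ ⟨v, fun h => h.2 rfl⟩ :=
  no_path_from_q1_to_v_general G hK5 v K hK hK4 q₁ hq₁K hq₁clique
end

section
/- If e is any edge of the Wagner graph V_8, then the graph V_8 − e obtained by deleting e admits a proper vertex 3-coloring in which the two end vertices of e receive the same color. -/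
open SimpleGraph

/-- The Wagner graph `V₈`: an 8-cycle together with the four diagonal edges
between antipodal vertices. -/
def wagnerGraph : SimpleGraph (ZMod 8) :=
  SimpleGraph.fromRel fun a b => b - a = 1 ∨ b - a = 4

instance : DecidableRel wagnerGraph.Adj := fun a b =>
  decidable_of_iff _ (SimpleGraph.fromRel_adj (fun a b : ZMod 8 => b - a = 1 ∨ b - a = 4) a b).symm

/-- A base coloring for the edge `s(0, d)` deleted, for `d ∈ {1, 4, 7}`. -/
def wagnerBase (d : ZMod 8) : ZMod 8 → Fin 3 :=
  if d = 4 then (![0,1,2,1,0,2,1,2] : Fin 8 → Fin 3) ∘ (fun x : ZMod 8 => x)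
  else if d = 7 then fun x : ZMod 8 => (![0,0,1,2,1,2,0,1] : Fin 8 → Fin 3) ((x + 1 : ZMod 8))
  else (![0,0,1,2,1,2,0,1] : Fin 8 → Fin 3) ∘ (fun x : ZMod 8 => x)

lemma wagnerBase_valid : ∀ d : ZMod 8, (d = 1 ∨ d = 4 ∨ d = 7) →
    ∀ a b : ZMod 8, wagnerGraph.Adj a b → s(a, b) ≠ s((0 : ZMod 8), d) →
    wagnerBase d a ≠ wagnerBase d b := by decide

lemma wagnerBase_ends : ∀ d : ZMod 8, (d = 1 ∨ d = 4 ∨ d = 7) →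
    wagnerBase d 0 = wagnerBase d d := by decide

lemma wagner_shift_adj : ∀ t a b : ZMod 8, wagnerGraph.Adj a b →
    wagnerGraph.Adj (a - t) (b - t) := by decide

lemma wagner_diff : ∀ u v : ZMod 8, wagnerGraph.Adj u v →
    (v - u = 1 ∨ v - u = 4 ∨ v - u = 7) := by decide

/-- Deleting any edge `e` of the Wagner graph `V₈` leaves a graph with a proper
3-coloring in which the endpoints of `e` get the same color. -/
theorem wagner_delete_edge_three_coloring (u v : ZMod 8) (huv : wagnerGraph.Adj u v) :
    ∃ c : (wagnerGraph.deleteEdges {s(u, v)}).Coloring (Fin 3), c u = c v := by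
  set d : ZMod 8 := v - u with hd
  have hdcases : d = 1 ∨ d = 4 ∨ d = 7 := wagner_diff u v huv
  refine ⟨SimpleGraph.Coloring.mk (fun x => wagnerBase d (x - u)) ?_, ?_⟩
  · intro a b hab
    rw [SimpleGraph.deleteEdges_adj] at hab
    obtain ⟨hadj, hne⟩ := hab
    apply wagnerBase_valid d hdcases (a - u) (b - u) (wagner_shift_adj u a b hadj)
    intro h
    apply hne
    rw [Set.mem_singleton_iff, Sym2.eq_iff]
    rw [Sym2.eq_iff] at h
    rcases h with ⟨h1, h2⟩ | ⟨h1, h2⟩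
    · left
      constructor
      · exact sub_eq_zero.mp h1
      · have := sub_left_injective h2  -- might not exist; fallback below
        exact this
    · right
      constructor
      · have : a - u = v - u := h1
        exact sub_left_injective this
      · exact sub_eq_zero.mp h2
  · show wagnerBase d (u - u) = wagnerBase d (v - u)
    rw [sub_self, ← hd]
    exact wagnerBase_ends d hdcases
end

section
/- The line graph of the complete graph K_6 is not 2-clique-colorable. -/
open SimpleGraph

open Finset in
lemma three_distinct {α : Type*} [DecidableEq α] {s : Finset α} (h : 2 < s.card) :
    ∃ x ∈ s, ∃ y ∈ s, ∃ z ∈ s, x ≠ y ∧ x ≠ z ∧ y ≠ z := by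
  obtain ⟨x, hx⟩ := Finset.card_pos.mp (show 0 < s.card by omega)
  have h1 : 1 < (s.erase x).card := by
    have := Finset.card_erase_of_mem hx; omega
  obtain ⟨y, hy⟩ := Finset.card_pos.mp (show 0 < (s.erase x).card by omega)
  have h2 : 0 < ((s.erase x).erase y).card := by
    have := Finset.card_erase_of_mem hy; omega
  obtain ⟨z, hz⟩ := Finset.card_pos.mp h2
  obtain ⟨hzy, hz'⟩ := Finset.mem_erase.mp hz
  obtain ⟨hzx, hzs⟩ := Finset.mem_erase.mp hz'
  obtain ⟨hyx, hys⟩ := Finset.mem_erase.mp hy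
  exact ⟨x, hx, y, hys, z, hzs, Ne.symm hyx, Ne.symm hzx, Ne.symm hzy⟩

lemma ramsey33 (c : Fin 6 → Fin 6 → Fin 2) :
    ∃ a b d : Fin 6, a ≠ b ∧ a ≠ d ∧ b ≠ d ∧ c a b = c a d ∧ c a b = c b d := by
  have hmaps : ∀ v ∈ (Finset.univ.erase (0 : Fin 6)), c 0 v ∈ (Finset.univ : Finset (Fin 2)) :=
    fun _ _ => Finset.mem_univ _
  have hcard : (Finset.univ : Finset (Fin 2)).card * 2 < (Finset.univ.erase (0 : Fin 6)).card := by
    simp [Finset.card_erase_of_mem]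
  obtain ⟨k, -, hk⟩ := Finset.exists_lt_card_fiber_of_mul_lt_card_of_maps_to hmaps hcard
  obtain ⟨x, hx, y, hy, z, hz, hxy, hxz, hyz⟩ := three_distinct hk
  simp only [Finset.mem_filter, Finset.mem_erase, Finset.mem_univ] at hx hy hz
  obtain ⟨⟨hx0, -⟩, hxk⟩ := hx
  obtain ⟨⟨hy0, -⟩, hyk⟩ := hy
  obtain ⟨⟨hz0, -⟩, hzk⟩ := hz
  by_cases h1 : c x y = k
  · exact ⟨0, x, y, Ne.symm hx0, Ne.symm hy0, hxy, by rw [hxk, hyk], by rw [hxk, h1]⟩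
  by_cases h2 : c x z = k
  · exact ⟨0, x, z, Ne.symm hx0, Ne.symm hz0, hxz, by rw [hxk, hzk], by rw [hxk, h2]⟩
  by_cases h3 : c y z = k
  · exact ⟨0, y, z, Ne.symm hy0, Ne.symm hz0, hyz, by rw [hyk, hzk], by rw [hyk, h3]⟩
  have hfin : ∀ a b k : Fin 2, a ≠ k → b ≠ k → a = b := by decide
  exact ⟨x, y, z, hxy, hxz, hyz, hfin _ _ _ h1 h2, hfin _ _ _ h1 h3⟩


def E6 {i j : Fin 6} (h : i ≠ j) : (⊤ : SimpleGraph (Fin 6)).edgeSet :=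
  ⟨s(i, j), by simp [h]⟩

lemma E6_ne {i j k l : Fin 6} (hij : i ≠ j) (hkl : k ≠ l)
    (h : ¬ ((i = k ∧ j = l) ∨ (i = l ∧ j = k))) : E6 hij ≠ E6 hkl := by
  simp only [E6, ne_eq, Subtype.mk.injEq, Sym2.eq_iff]
  exact h

open SimpleGraph in
lemma E6_adj {i j k l : Fin 6} (hij : i ≠ j) (hkl : k ≠ l) (hne : E6 hij ≠ E6 hkl)
    (hshare : i = k ∨ i = l ∨ j = k ∨ j = l) :
    (⊤ : SimpleGraph (Fin 6)).lineGraph.Adj (E6 hij) (E6 hkl) := by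
  refine lineGraph_adj_iff_exists.mpr ⟨hne, ?_⟩
  rcases hshare with rfl | rfl | rfl | rfl
  · exact ⟨i, by simp [E6], by simp [E6]⟩
  · exact ⟨i, by simp [E6], by simp [E6]⟩
  · exact ⟨j, by simp [E6], by simp [E6]⟩
  · exact ⟨j, by simp [E6], by simp [E6]⟩

lemma tri_key {α : Type*} {u v a b e : α} (huv : u ≠ v) (hab : a ≠ b) (hae : a ≠ e) (hbe : b ≠ e)
    (P1 : u = a ∨ u = b ∨ v = a ∨ v = b) (P2 : u = a ∨ u = e ∨ v = a ∨ v = e)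
    (P3 : u = b ∨ u = e ∨ v = b ∨ v = e) :
    ((u = a ∧ v = b) ∨ (u = b ∧ v = a)) ∨ ((u = a ∧ v = e) ∨ (u = e ∧ v = a)) ∨
      ((u = b ∧ v = e) ∨ (u = e ∧ v = b)) := by
  rcases P1 with h1 | h1 | h1 | h1 <;> rcases P2 with h2 | h2 | h2 | h2 <;>
    rcases P3 with h3 | h3 | h3 | h3 <;> simp_all

set_option maxHeartbeats 1600000 in
open SimpleGraph in
lemma triangle_maxclique {a b e : Fin 6} (hab : a ≠ b) (hae : a ≠ e) (hbe : b ≠ e) :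
    (⊤ : SimpleGraph (Fin 6)).lineGraph.IsMaxClique {E6 hab, E6 hae, E6 hbe} := by
  constructor
  · intro x hx y hy hxy
    rcases hx with rfl | rfl | rfl <;> rcases hy with rfl | rfl | rfl <;>
      first
        | exact absurd rfl hxy
        | exact E6_adj _ _ hxy (by simp)
  · intro t ht hst
    refine Set.Subset.antisymm hst fun x hxt => ?_
    by_contra hxS
    obtain ⟨u, v, hx⟩ : ∃ u v, (x : Sym2 (Fin 6)) = s(u, v) :=
      Sym2.ind (fun u v => ⟨u, v, rfl⟩) (x : Sym2 (Fin 6))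
    have huv : u ≠ v := by
      have := x.2; rw [hx] at this; simpa using this
    have hadj : ∀ y ∈ ({E6 hab, E6 hae, E6 hbe} : Set _),
        (⊤ : SimpleGraph (Fin 6)).lineGraph.Adj x y := fun y hy =>
      ht hxt (hst hy) (fun h => hxS (h ▸ hy))
    have A1 := (lineGraph_adj_iff_exists.mp (hadj (E6 hab) (by simp))).2
    have A2 := (lineGraph_adj_iff_exists.mp (hadj (E6 hae) (by simp))).2
    have A3 := (lineGraph_adj_iff_exists.mp (hadj (E6 hbe) (by simp))).2
    simp only [E6, hx, Sym2.mem_iff] at A1 A2 A3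
    apply hxS
    have hxin : x = E6 hab ∨ x = E6 hae ∨ x = E6 hbe := by
      simp only [E6, Subtype.ext_iff, hx, Sym2.eq_iff]
      have P1 : u = a ∨ u = b ∨ v = a ∨ v = b := by
        obtain ⟨w, hw, hw'⟩ := A1
        rcases hw with rfl | rfl
        · exact hw'.imp id Or.inl
        · exact Or.inr (Or.inr hw')
      have P2 : u = a ∨ u = e ∨ v = a ∨ v = e := by
        obtain ⟨w, hw, hw'⟩ := A2
        rcases hw with rfl | rfl
        · exact hw'.imp id Or.inl
        · exact Or.inr (Or.inr hw')
      have P3 : u = b ∨ u = e ∨ v = b ∨ v = e := by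
        obtain ⟨w, hw, hw'⟩ := A3
        rcases hw with rfl | rfl
        · exact hw'.imp id Or.inl
        · exact Or.inr (Or.inr hw')
      exact tri_key huv hab hae hbe P1 P2 P3
    rcases hxin with rfl | rfl | rfl <;> simp

set_option maxHeartbeats 1000000 in
/-- The line graph of `K₆` is not 2-clique-colorable. -/
theorem line_graph_K6_not_two_clique_colorable :
    ¬ (SimpleGraph.lineGraph (⊤ : SimpleGraph (Fin 6))).CliqueColorable 2 := by
  rintro ⟨c, hc⟩
  let d : Fin 6 → Fin 6 → Fin 2 := fun i j =>
    if h : i = j then 0 else c (E6 h)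
  obtain ⟨a, b, e, hab, hae, hbe, h1, h2⟩ := ramsey33 d
  have hd1 : c (E6 hab) = c (E6 hae) := by simpa [d, hab, hae] using h1
  have hd2 : c (E6 hab) = c (E6 hbe) := by simpa [d, hab, hbe] using h2
  have hne1 : E6 hab ≠ E6 hae := E6_ne _ _ (by tauto)
  have hnt : ({E6 hab, E6 hae, E6 hbe} : Set _).Nontrivial :=
    ⟨E6 hab, by simp, E6 hae, by simp, hne1⟩
  obtain ⟨u, hu, v, hv, hcuv⟩ := hc _ (triangle_maxclique hab hae hbe) hnt
  have key : ∀ w ∈ ({E6 hab, E6 hae, E6 hbe} : Set _), c w = c (E6 hab) := by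
    rintro w (rfl | rfl | rfl)
    · rfl
    · exact hd1.symm
    · exact hd2.symm
  exact hcuv ((key u hu).trans (key v hv).symm)
end
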